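/- arXiv:2403.15936 — 4 statements merged into one kernel-verified Lean document; each statement's English description precedes it below -/
import Mathlib

section
/- Sufficient optimality condition for service-chain forwarding and offloading (Theorem 2): In the service-chain model, let (φ,t) be feasible for r and let λ be a marginal vector for (φ,t) satisfying the sufficient-optimality condition. Then (φ,t) is a global optimum of the total-cost minimization problem: T(φ,t) ≤ T(φ†,t†) for every pair (φ†,t†) feasible for the same input rates r. -/
open scoped BigOperators
open Classical

/-- The service-chain network model: a finite directed graph, a finite set of
applications, each with a chain length, a destination, packet sizes and computation
weights, together with nondecreasing convex continuously differentiable link and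
computation cost functions (with their derivatives). -/
structure SCNet (V A : Type) [Fintype V] [DecidableEq V] [Fintype A] where
  /-- the edge relation -/
  E : V → V → Prop
  /-- chain length of each application -/
  K : A → ℕ
  /-- destination of each application -/
  dest : A → V
  /-- packet size of each stage -/
  L : A → ℕ → ℝ
  hL : ∀ a k, k ≤ K a → 0 < L a k
  /-- computation weights -/
  w : V → A → ℕ → ℝ
  hw : ∀ i a k, k ≤ K a → 0 < w i a k
  /-- link cost functions -/
  D : V → V → ℝ → ℝ
  /-- derivative of the link cost functions -/
  D' : V → V → ℝ → ℝ
  /-- computation cost functions -/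
  C : V → ℝ → ℝ
  /-- derivative of the computation cost functions -/
  C' : V → ℝ → ℝ
  hD_mono : ∀ i j, E i j → MonotoneOn (D i j) (Set.Ici 0)
  hD_conv : ∀ i j, E i j → ConvexOn ℝ (Set.Ici 0) (D i j)
  hD_deriv : ∀ i j, E i j → ∀ x ∈ Set.Ici (0 : ℝ),
    HasDerivWithinAt (D i j) (D' i j x) (Set.Ici 0) x
  hD'_cont : ∀ i j, E i j → ContinuousOn (D' i j) (Set.Ici 0)
  hC_mono : ∀ i, MonotoneOn (C i) (Set.Ici 0)
  hC_conv : ∀ i, ConvexOn ℝ (Set.Ici 0) (C i)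
  hC_deriv : ∀ i, ∀ x ∈ Set.Ici (0 : ℝ),
    HasDerivWithinAt (C i) (C' i x) (Set.Ici 0) x
  hC'_cont : ∀ i, ContinuousOn (C' i) (Set.Ici 0)

variable {V A : Type} [Fintype V] [DecidableEq V] [Fintype A]

/-- A forwarding strategy: `φ i (some j) a k` is the fraction of stage-(a,k) traffic
that node `i` forwards to node `j`; `φ i none a k` is the fraction forwarded to `i`'s CPU. -/
structure IsStrategy (N : SCNet V A) (φ : V → Option V → A → ℕ → ℝ) : Prop where
  nonneg : ∀ i j a k, 0 ≤ φ i j a k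
  le_one : ∀ i j a k, φ i j a k ≤ 1
  no_edge : ∀ i j a k, ¬ N.E i j → φ i (some j) a k = 0
  cpu_last : ∀ i a, φ i none a (N.K a) = 0
  sum_one : ∀ i a k, k ≤ N.K a → ¬(i = N.dest a ∧ k = N.K a) →
    φ i none a k + ∑ j, φ i (some j) a k = 1
  sum_dest : ∀ a,
    φ (N.dest a) none a (N.K a) + ∑ j, φ (N.dest a) (some j) a (N.K a) = 0

/-- A traffic vector for input rates `r` and strategy `φ`. -/
structure IsTraffic (N : SCNet V A) (r : V → A → ℝ) (φ : V → Option V → A → ℕ → ℝ)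
    (t : V → A → ℕ → ℝ) : Prop where
  nonneg : ∀ i a k, 0 ≤ t i a k
  base : ∀ i a, t i a 0 = r i a + ∑ j, t j a 0 * φ j (some i) a 0
  step : ∀ i a k, 1 ≤ k → k ≤ N.K a →
    t i a k = (∑ j, t j a k * φ j (some i) a k) + t i a (k - 1) * φ i none a (k - 1)

/-- A pair (strategy, traffic) feasible for the input rates `r`. -/
def Feasible (N : SCNet V A) (r : V → A → ℝ) (φ : V → Option V → A → ℕ → ℝ)
    (t : V → A → ℕ → ℝ) : Prop :=
  IsStrategy N φ ∧ IsTraffic N r φ t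

/-- Total flow (bit/sec) on link `(i,j)`. -/
noncomputable def linkFlow (N : SCNet V A) (φ : V → Option V → A → ℕ → ℝ)
    (t : V → A → ℕ → ℝ) (i j : V) : ℝ :=
  ∑ a, ∑ k ∈ Finset.range (N.K a + 1), N.L a k * (t i a k * φ i (some j) a k)

/-- Total computation workload at node `i`. -/
noncomputable def workload (N : SCNet V A) (φ : V → Option V → A → ℕ → ℝ)
    (t : V → A → ℕ → ℝ) (i : V) : ℝ :=
  ∑ a, ∑ k ∈ Finset.range (N.K a + 1), N.w i a k * (t i a k * φ i none a k)

/-- The aggregated communication and computation cost `T(φ,t)`. -/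
noncomputable def totalCost (N : SCNet V A) (φ : V → Option V → A → ℕ → ℝ)
    (t : V → A → ℕ → ℝ) : ℝ :=
  (∑ i, ∑ j, if N.E i j then N.D i j (linkFlow N φ t i j) else 0)
    + ∑ i, N.C i (workload N φ t i)

/-- A marginal-cost vector `λ` for the pair `(φ,t)`, i.e. a solution of the
recursion defining `∂T/∂t_i(a,k)`. -/
structure IsMarginal (N : SCNet V A) (φ : V → Option V → A → ℕ → ℝ)
    (t : V → A → ℕ → ℝ) (lam : V → A → ℕ → ℝ) : Prop where
  last : ∀ i a, lam i a (N.K a) =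
    ∑ j, φ i (some j) a (N.K a) *
      (N.L a (N.K a) * N.D' i j (linkFlow N φ t i j) + lam j a (N.K a))
  step : ∀ i a k, k < N.K a →
    lam i a k =
      (∑ j, φ i (some j) a k * (N.L a k * N.D' i j (linkFlow N φ t i j) + lam j a k))
        + φ i none a k * (N.w i a k * N.C' i (workload N φ t i) + lam i a (k + 1))

/-- `j` is an admissible forwarding direction at node `i` and stage `(a,k)`:
either a physical out-neighbor, or the CPU provided `k < K a`. -/
def Admissible (N : SCNet V A) (i : V) (a : A) (k : ℕ) : Option V → Prop
  | some j => N.E i j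
  | none => k < N.K a

/-- The modified marginals `δ_{ij}(a,k)`. -/
noncomputable def mdelta (N : SCNet V A) (φ : V → Option V → A → ℕ → ℝ)
    (t : V → A → ℕ → ℝ) (lam : V → A → ℕ → ℝ) (i : V) (a : A) (k : ℕ) :
    Option V → ℝ
  | some j => N.L a k * N.D' i j (linkFlow N φ t i j) + lam j a k
  | none => N.w i a k * N.C' i (workload N φ t i) + lam i a (k + 1)

/-- The sufficient-optimality condition: every direction used at node `i` for stage
`(a,k)` achieves the minimum modified marginal over all admissible directions. -/
def SuffCond (N : SCNet V A) (φ : V → Option V → A → ℕ → ℝ)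
    (t : V → A → ℕ → ℝ) (lam : V → A → ℕ → ℝ) : Prop :=
  ∀ i a k, k ≤ N.K a → ∀ j, Admissible N i a k j → 0 < φ i j a k →
    ∀ j', Admissible N i a k j' →
      mdelta N φ t lam i a k j ≤ mdelta N φ t lam i a k j'


section AuxProof

variable {V A : Type} [Fintype V] [DecidableEq V] [Fintype A]

private lemma grad_ineq {f f' : ℝ → ℝ} (hconv : ConvexOn ℝ (Set.Ici 0) f)
    (hder : ∀ x ∈ Set.Ici (0:ℝ), HasDerivWithinAt f (f' x) (Set.Ici 0) x)
    {x y : ℝ} (hx : 0 ≤ x) (hy : 0 ≤ y) : f x + f' x * (y - x) ≤ f y := by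
  rcases lt_trichotomy x y with h | h | h
  · have hs := hconv.le_slope_of_hasDerivWithinAt hx hy h (hder x hx)
    rw [slope_def_field] at hs
    have h1 : 0 < y - x := by linarith
    have h2 : f' x * (y - x) ≤ f y - f x := by
      rw [← le_div_iff₀ h1]; exact hs
    linarith
  · subst h; simp
  · have hs := hconv.slope_le_of_hasDerivWithinAt hy hx h (hder x hx)
    rw [slope_def_field] at hs
    have h1 : 0 < x - y := by linarith
    have h2 : f x - f y ≤ f' x * (x - y) := by
      rw [← div_le_iff₀ h1]; exact hs
    have h3 : f' x * (y - x) = -(f' x * (x - y)) := by ring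
    linarith

private lemma linkFlow_nonneg (N : SCNet V A) {ψ : V → Option V → A → ℕ → ℝ}
    {s : V → A → ℕ → ℝ} (hψ : IsStrategy N ψ) (hs : ∀ i a k, 0 ≤ s i a k) (i j : V) :
    0 ≤ linkFlow N ψ s i j := by
  refine Finset.sum_nonneg fun a _ => Finset.sum_nonneg fun k hk => ?_
  have hkK : k ≤ N.K a := Nat.lt_succ_iff.mp (Finset.mem_range.mp hk)
  exact mul_nonneg (N.hL a k hkK).le (mul_nonneg (hs i a k) (hψ.nonneg i (some j) a k))

private lemma workload_nonneg (N : SCNet V A) {ψ : V → Option V → A → ℕ → ℝ}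
    {s : V → A → ℕ → ℝ} (hψ : IsStrategy N ψ) (hs : ∀ i a k, 0 ≤ s i a k) (i : V) :
    0 ≤ workload N ψ s i := by
  refine Finset.sum_nonneg fun a _ => Finset.sum_nonneg fun k hk => ?_
  have hkK : k ≤ N.K a := Nat.lt_succ_iff.mp (Finset.mem_range.mp hk)
  exact mul_nonneg (N.hw i a k hkK).le (mul_nonneg (hs i a k) (hψ.nonneg i none a k))

private lemma linkFlow_not_edge (N : SCNet V A) {ψ : V → Option V → A → ℕ → ℝ}
    {s : V → A → ℕ → ℝ} (hψ : IsStrategy N ψ) {i j : V} (h : ¬ N.E i j) :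
    linkFlow N ψ s i j = 0 := by
  refine Finset.sum_eq_zero fun a _ => Finset.sum_eq_zero fun k _ => ?_
  rw [hψ.no_edge i j a k h]; ring

private lemma lam_formula (N : SCNet V A) {φ : V → Option V → A → ℕ → ℝ}
    {t : V → A → ℕ → ℝ} {lam : V → A → ℕ → ℝ}
    (hφ : IsStrategy N φ) (hlam : IsMarginal N φ t lam)
    (i : V) (a : A) (k : ℕ) (hk : k ≤ N.K a) :
    lam i a k = (∑ j, φ i (some j) a k * mdelta N φ t lam i a k (some j))
      + φ i none a k * mdelta N φ t lam i a k none := by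
  rcases lt_or_eq_of_le hk with h | h
  · simpa [mdelta] using hlam.step i a k h
  · subst h
    rw [hφ.cpu_last i a]
    simpa [mdelta] using hlam.last i a

private lemma dest_phi_zero (N : SCNet V A) {φ : V → Option V → A → ℕ → ℝ}
    (hφ : IsStrategy N φ) (a : A) (j : Option V) :
    φ (N.dest a) j a (N.K a) = 0 := by
  have hsum := hφ.sum_dest a
  have h0 : 0 ≤ φ (N.dest a) none a (N.K a) := hφ.nonneg _ _ _ _
  have h1 : 0 ≤ ∑ j, φ (N.dest a) (some j) a (N.K a) :=
    Finset.sum_nonneg fun j _ => hφ.nonneg _ _ _ _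
  have hnone : φ (N.dest a) none a (N.K a) = 0 := by linarith
  have hsome : ∑ j, φ (N.dest a) (some j) a (N.K a) = 0 := by linarith
  match j with
  | none => exact hnone
  | some j =>
    have := (Finset.sum_eq_zero_iff_of_nonneg
      (fun j _ => hφ.nonneg (N.dest a) (some j) a (N.K a))).mp hsome
    exact this j (Finset.mem_univ j)

private lemma lam_dest (N : SCNet V A) {φ : V → Option V → A → ℕ → ℝ}
    {t : V → A → ℕ → ℝ} {lam : V → A → ℕ → ℝ}
    (hφ : IsStrategy N φ) (hlam : IsMarginal N φ t lam) (a : A) :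
    lam (N.dest a) a (N.K a) = 0 := by
  rw [hlam.last (N.dest a) a]
  refine Finset.sum_eq_zero fun j _ => ?_
  rw [dest_phi_zero N hφ a (some j)]; ring

private lemma lam_le_mdelta (N : SCNet V A) {φ : V → Option V → A → ℕ → ℝ}
    {t : V → A → ℕ → ℝ} {lam : V → A → ℕ → ℝ}
    (hφ : IsStrategy N φ) (hlam : IsMarginal N φ t lam)
    (hsuff : SuffCond N φ t lam)
    (i : V) (a : A) (k : ℕ) (hk : k ≤ N.K a) (hne : ¬(i = N.dest a ∧ k = N.K a))
    (j : Option V) (hj : Admissible N i a k j) :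
    lam i a k ≤ mdelta N φ t lam i a k j := by
  have hadm : ∀ j' : Option V, 0 < φ i j' a k → Admissible N i a k j' := by
    intro j' hpos
    match j' with
    | some v =>
      by_contra hE
      exact absurd (hφ.no_edge i v a k hE) (by linarith)
    | none =>
      rcases lt_or_eq_of_le hk with h | h
      · exact h
      · exfalso; rw [h] at hpos; rw [hφ.cpu_last i a] at hpos; linarith
  have hterm : ∀ j' : Option V, φ i j' a k * mdelta N φ t lam i a k j'
      ≤ φ i j' a k * mdelta N φ t lam i a k j := by
    intro j'
    rcases eq_or_lt_of_le (hφ.nonneg i j' a k) with h0 | h0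
    · rw [← h0]; simp
    · exact mul_le_mul_of_nonneg_left (hsuff i a k hk j' (hadm j' h0) h0 j hj) h0.le
  calc lam i a k
      = (∑ j', φ i (some j') a k * mdelta N φ t lam i a k (some j'))
        + φ i none a k * mdelta N φ t lam i a k none := lam_formula N hφ hlam i a k hk
    _ ≤ (∑ j', φ i (some j') a k * mdelta N φ t lam i a k j)
        + φ i none a k * mdelta N φ t lam i a k j := by
        exact add_le_add (Finset.sum_le_sum fun j' _ => hterm (some j')) (hterm none)
    _ = (φ i none a k + ∑ j', φ i (some j') a k) * mdelta N φ t lam i a k j := by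
        rw [add_mul, Finset.sum_mul, add_comm]
    _ = mdelta N φ t lam i a k j := by rw [hφ.sum_one i a k hk hne, one_mul]

end AuxProof

section AuxProof2

variable {V A : Type} [Fintype V] [DecidableEq V] [Fintype A]

/-- first-order term of the cost at reference point `(φ,t)` evaluated on `(ψ,s)` -/
private noncomputable def Sval (N : SCNet V A) (φ : V → Option V → A → ℕ → ℝ)
    (t : V → A → ℕ → ℝ) (ψ : V → Option V → A → ℕ → ℝ) (s : V → A → ℕ → ℝ) : ℝ :=
  (∑ i, ∑ j, N.D' i j (linkFlow N φ t i j) * linkFlow N ψ s i j)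
    + ∑ i, N.C' i (workload N φ t i) * workload N ψ s i

private noncomputable def Aterm (N : SCNet V A) (φ : V → Option V → A → ℕ → ℝ)
    (t : V → A → ℕ → ℝ) (lam : V → A → ℕ → ℝ)
    (ψ : V → Option V → A → ℕ → ℝ) (s : V → A → ℕ → ℝ) : ℝ :=
  ∑ a, ∑ k ∈ Finset.range (N.K a + 1), ∑ i,
    ((∑ j, s i a k * ψ i (some j) a k * mdelta N φ t lam i a k (some j))
      + s i a k * ψ i none a k * mdelta N φ t lam i a k none)

private noncomputable def Bterm (N : SCNet V A) (lam : V → A → ℕ → ℝ)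
    (ψ : V → Option V → A → ℕ → ℝ) (s : V → A → ℕ → ℝ) : ℝ :=
  ∑ a, ∑ k ∈ Finset.range (N.K a + 1), ∑ i,
    ((∑ j, s i a k * ψ i (some j) a k * lam j a k)
      + s i a k * ψ i none a k * lam i a (k + 1))

private lemma sum_swap3 {β : Type} [Fintype β] (n : A → ℕ) (F : A → ℕ → β → ℝ) :
    ∑ a, ∑ k ∈ Finset.range (n a), ∑ i : β, F a k i
      = ∑ i : β, ∑ a, ∑ k ∈ Finset.range (n a), F a k i := by
  calc ∑ a, ∑ k ∈ Finset.range (n a), ∑ i : β, F a k i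
      = ∑ a, ∑ i : β, ∑ k ∈ Finset.range (n a), F a k i :=
        Finset.sum_congr rfl fun a _ => Finset.sum_comm
    _ = ∑ i : β, ∑ a, ∑ k ∈ Finset.range (n a), F a k i := Finset.sum_comm

private lemma sum_swap4 {β γ : Type} [Fintype β] [Fintype γ] (n : A → ℕ)
    (F : A → ℕ → β → γ → ℝ) :
    ∑ a, ∑ k ∈ Finset.range (n a), ∑ i : β, ∑ j : γ, F a k i j
      = ∑ i : β, ∑ j : γ, ∑ a, ∑ k ∈ Finset.range (n a), F a k i j := by
  calc ∑ a, ∑ k ∈ Finset.range (n a), ∑ i : β, ∑ j : γ, F a k i j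
      = ∑ a, ∑ i : β, ∑ j : γ, ∑ k ∈ Finset.range (n a), F a k i j := by
        refine Finset.sum_congr rfl fun a _ => ?_
        rw [Finset.sum_comm]
        exact Finset.sum_congr rfl fun i _ => Finset.sum_comm
    _ = ∑ i : β, ∑ a, ∑ j : γ, ∑ k ∈ Finset.range (n a), F a k i j := Finset.sum_comm
    _ = ∑ i : β, ∑ j : γ, ∑ a, ∑ k ∈ Finset.range (n a), F a k i j :=
        Finset.sum_congr rfl fun i _ => Finset.sum_comm

private lemma sval_decomp (N : SCNet V A) (φ : V → Option V → A → ℕ → ℝ)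
    (t : V → A → ℕ → ℝ) (lam : V → A → ℕ → ℝ)
    (ψ : V → Option V → A → ℕ → ℝ) (s : V → A → ℕ → ℝ) :
    Aterm N φ t lam ψ s = Sval N φ t ψ s + Bterm N lam ψ s := by
  unfold Aterm Sval Bterm
  have hA : ∀ (a : A) (k : ℕ) (i : V),
      ((∑ j, s i a k * ψ i (some j) a k * mdelta N φ t lam i a k (some j))
        + s i a k * ψ i none a k * mdelta N φ t lam i a k none)
      = ((∑ j, s i a k * ψ i (some j) a k * (N.L a k * N.D' i j (linkFlow N φ t i j)))
          + s i a k * ψ i none a k * (N.w i a k * N.C' i (workload N φ t i)))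
        + ((∑ j, s i a k * ψ i (some j) a k * lam j a k)
          + s i a k * ψ i none a k * lam i a (k + 1)) := by
    intro a k i
    simp only [mdelta]
    have : ∀ j : V, s i a k * ψ i (some j) a k *
          (N.L a k * N.D' i j (linkFlow N φ t i j) + lam j a k)
        = s i a k * ψ i (some j) a k * (N.L a k * N.D' i j (linkFlow N φ t i j))
          + s i a k * ψ i (some j) a k * lam j a k := fun j => by ring
    rw [Finset.sum_congr rfl fun j _ => this j, Finset.sum_add_distrib]
    ring
  calc ∑ a, ∑ k ∈ Finset.range (N.K a + 1), ∑ i,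
        ((∑ j, s i a k * ψ i (some j) a k * mdelta N φ t lam i a k (some j))
          + s i a k * ψ i none a k * mdelta N φ t lam i a k none)
      = (∑ a, ∑ k ∈ Finset.range (N.K a + 1), ∑ i,
          ((∑ j, s i a k * ψ i (some j) a k * (N.L a k * N.D' i j (linkFlow N φ t i j)))
            + s i a k * ψ i none a k * (N.w i a k * N.C' i (workload N φ t i))))
        + (∑ a, ∑ k ∈ Finset.range (N.K a + 1), ∑ i,
          ((∑ j, s i a k * ψ i (some j) a k * lam j a k)
            + s i a k * ψ i none a k * lam i a (k + 1))) := by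
        rw [← Finset.sum_add_distrib]
        refine Finset.sum_congr rfl fun a _ => ?_
        rw [← Finset.sum_add_distrib]
        refine Finset.sum_congr rfl fun k _ => ?_
        rw [← Finset.sum_add_distrib]
        exact Finset.sum_congr rfl fun i _ => hA a k i
  _ = ((∑ i, ∑ j, N.D' i j (linkFlow N φ t i j) * linkFlow N ψ s i j)
        + ∑ i, N.C' i (workload N φ t i) * workload N ψ s i)
      + (∑ a, ∑ k ∈ Finset.range (N.K a + 1), ∑ i,
          ((∑ j, s i a k * ψ i (some j) a k * lam j a k)
            + s i a k * ψ i none a k * lam i a (k + 1))) := by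
      congr 1
      have h1 : ∑ a, ∑ k ∈ Finset.range (N.K a + 1), ∑ i,
            ((∑ j, s i a k * ψ i (some j) a k * (N.L a k * N.D' i j (linkFlow N φ t i j)))
              + s i a k * ψ i none a k * (N.w i a k * N.C' i (workload N φ t i)))
          = (∑ a, ∑ k ∈ Finset.range (N.K a + 1), ∑ i, ∑ j,
              s i a k * ψ i (some j) a k * (N.L a k * N.D' i j (linkFlow N φ t i j)))
            + ∑ a, ∑ k ∈ Finset.range (N.K a + 1), ∑ i,
              s i a k * ψ i none a k * (N.w i a k * N.C' i (workload N φ t i)) := by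
        rw [← Finset.sum_add_distrib]
        refine Finset.sum_congr rfl fun a _ => ?_
        rw [← Finset.sum_add_distrib]
        refine Finset.sum_congr rfl fun k _ => ?_
        rw [← Finset.sum_add_distrib]
      rw [h1, sum_swap4, sum_swap3]
      congr 1
      · refine Finset.sum_congr rfl fun i _ => Finset.sum_congr rfl fun j _ => ?_
        unfold linkFlow
        rw [Finset.mul_sum]
        refine Finset.sum_congr rfl fun a _ => ?_
        rw [Finset.mul_sum]
        exact Finset.sum_congr rfl fun k _ => by ring
      · refine Finset.sum_congr rfl fun i _ => ?_
        unfold workload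
        rw [Finset.mul_sum]
        refine Finset.sum_congr rfl fun a _ => ?_
        rw [Finset.mul_sum]
        exact Finset.sum_congr rfl fun k _ => by ring

end AuxProof2

section AuxProof3

variable {V A : Type} [Fintype V] [DecidableEq V] [Fintype A]

private lemma bterm_eq (N : SCNet V A) {r : V → A → ℝ} {ψ : V → Option V → A → ℕ → ℝ}
    {s : V → A → ℕ → ℝ} (hψ : IsStrategy N ψ) (hs : IsTraffic N r ψ s)
    (lam : V → A → ℕ → ℝ) :
    Bterm N lam ψ s = (∑ a, ∑ k ∈ Finset.range (N.K a + 1), ∑ i, s i a k * lam i a k)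
      - ∑ a, ∑ i, r i a * lam i a 0 := by
  unfold Bterm
  rw [← Finset.sum_sub_distrib]
  refine Finset.sum_congr rfl fun a _ => ?_
  have hT1 : ∀ k : ℕ, ∑ i, ∑ j, s i a k * ψ i (some j) a k * lam j a k
      = ∑ i, (∑ j, s j a k * ψ j (some i) a k) * lam i a k := by
    intro k
    rw [Finset.sum_comm]
    exact Finset.sum_congr rfl fun i _ => (Finset.sum_mul _ _ _).symm
  calc ∑ k ∈ Finset.range (N.K a + 1), ∑ i,
        ((∑ j, s i a k * ψ i (some j) a k * lam j a k)
          + s i a k * ψ i none a k * lam i a (k + 1))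
      = ∑ k ∈ Finset.range (N.K a + 1),
          ((∑ i, (∑ j, s j a k * ψ j (some i) a k) * lam i a k)
            + ∑ i, s i a k * ψ i none a k * lam i a (k + 1)) := by
        refine Finset.sum_congr rfl fun k _ => ?_
        rw [Finset.sum_add_distrib, hT1 k]
    _ = (∑ k ∈ Finset.range (N.K a + 1), ∑ i, (∑ j, s j a k * ψ j (some i) a k) * lam i a k)
        + ∑ k ∈ Finset.range (N.K a + 1), ∑ i, s i a k * ψ i none a k * lam i a (k + 1) :=
        Finset.sum_add_distrib
    _ = ((∑ k ∈ Finset.range (N.K a), ∑ i,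
            (∑ j, s j a (k+1) * ψ j (some i) a (k+1)) * lam i a (k+1))
          + ∑ i, (∑ j, s j a 0 * ψ j (some i) a 0) * lam i a 0)
        + ∑ k ∈ Finset.range (N.K a), ∑ i, s i a k * ψ i none a k * lam i a (k + 1) := by
        rw [Finset.sum_range_succ'
          (fun k => ∑ i, (∑ j, s j a k * ψ j (some i) a k) * lam i a k) (N.K a)]
        congr 1
        rw [Finset.sum_range_succ]
        have hz : ∑ i, s i a (N.K a) * ψ i none a (N.K a) * lam i a (N.K a + 1) = 0 :=
          Finset.sum_eq_zero fun i _ => by rw [hψ.cpu_last i a]; ring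
        rw [hz, add_zero]
    _ = (∑ k ∈ Finset.range (N.K a), ∑ i, s i a (k+1) * lam i a (k+1))
        + ((∑ i, s i a 0 * lam i a 0) - ∑ i, r i a * lam i a 0) := by
        have hk : ∀ k ∈ Finset.range (N.K a),
            (∑ i, (∑ j, s j a (k+1) * ψ j (some i) a (k+1)) * lam i a (k+1))
              + ∑ i, s i a k * ψ i none a k * lam i a (k + 1)
            = ∑ i, s i a (k+1) * lam i a (k+1) := by
          intro k hkmem
          rw [← Finset.sum_add_distrib]
          refine Finset.sum_congr rfl fun i _ => ?_
          have hst := hs.step i a (k+1) (Nat.succ_le_succ (Nat.zero_le k))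
            (Nat.succ_le_of_lt (Finset.mem_range.mp hkmem))
          simp only [Nat.add_sub_cancel] at hst
          rw [hst]; ring
        have h0 : ∑ i, (∑ j, s j a 0 * ψ j (some i) a 0) * lam i a 0
            = (∑ i, s i a 0 * lam i a 0) - ∑ i, r i a * lam i a 0 := by
          rw [← Finset.sum_sub_distrib]
          refine Finset.sum_congr rfl fun i _ => ?_
          have hb := hs.base i a
          have hIN : (∑ j, s j a 0 * ψ j (some i) a 0) = s i a 0 - r i a := by linarith
          rw [hIN]; ring
        have hsum : ∑ k ∈ Finset.range (N.K a), ∑ i, s i a (k+1) * lam i a (k+1)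
            = (∑ k ∈ Finset.range (N.K a), ∑ i,
                (∑ j, s j a (k+1) * ψ j (some i) a (k+1)) * lam i a (k+1))
              + ∑ k ∈ Finset.range (N.K a), ∑ i, s i a k * ψ i none a k * lam i a (k + 1) := by
          rw [← Finset.sum_add_distrib]
          exact (Finset.sum_congr rfl hk).symm
        rw [h0, hsum]; ring
    _ = (∑ k ∈ Finset.range (N.K a + 1), ∑ i, s i a k * lam i a k)
        - ∑ i, r i a * lam i a 0 := by
        rw [Finset.sum_range_succ' (fun k => ∑ i, s i a k * lam i a k) (N.K a)]
        ring

private lemma aterm_ge (N : SCNet V A) {φ : V → Option V → A → ℕ → ℝ}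
    {t : V → A → ℕ → ℝ} {lam : V → A → ℕ → ℝ}
    (hφ : IsStrategy N φ) (hlam : IsMarginal N φ t lam) (hsuff : SuffCond N φ t lam)
    {ψ : V → Option V → A → ℕ → ℝ} {s : V → A → ℕ → ℝ}
    (hψ : IsStrategy N ψ) (hs : ∀ i a k, 0 ≤ s i a k) :
    (∑ a, ∑ k ∈ Finset.range (N.K a + 1), ∑ i, s i a k * lam i a k)
      ≤ Aterm N φ t lam ψ s := by
  unfold Aterm
  refine Finset.sum_le_sum fun a _ => Finset.sum_le_sum fun k hk =>
    Finset.sum_le_sum fun i _ => ?_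
  have hkK : k ≤ N.K a := Nat.lt_succ_iff.mp (Finset.mem_range.mp hk)
  by_cases hne : i = N.dest a ∧ k = N.K a
  · obtain ⟨h1, h2⟩ := hne
    subst h1; subst h2
    have hz := dest_phi_zero N hψ a
    rw [lam_dest N hφ hlam a]
    have hZ1 : (∑ j, s (N.dest a) a (N.K a) * ψ (N.dest a) (some j) a (N.K a)
        * mdelta N φ t lam (N.dest a) a (N.K a) (some j)) = 0 :=
      Finset.sum_eq_zero fun j _ => by rw [hz (some j)]; ring
    rw [hZ1, hz none]
    simp
  · have expand : s i a k * lam i a k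
        = (∑ j, s i a k * ψ i (some j) a k * lam i a k)
          + s i a k * ψ i none a k * lam i a k := by
      have h1 := hψ.sum_one i a k hkK hne
      have h2 : s i a k * lam i a k
          = s i a k * lam i a k * (ψ i none a k + ∑ j, ψ i (some j) a k) := by
        rw [h1, mul_one]
      rw [h2, mul_add, Finset.mul_sum, add_comm]
      congr 1
      · exact Finset.sum_congr rfl fun j _ => by ring
      · ring
    rw [expand]
    refine add_le_add (Finset.sum_le_sum fun j _ => ?_) ?_
    · rcases eq_or_lt_of_le (hψ.nonneg i (some j) a k) with h0 | h0
      · rw [← h0]; simp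
      · have hE : N.E i j := by
          by_contra hE
          exact absurd (hψ.no_edge i j a k hE) (by linarith)
        have hle := lam_le_mdelta N hφ hlam hsuff i a k hkK hne (some j) hE
        exact mul_le_mul_of_nonneg_left hle (mul_nonneg (hs i a k) h0.le)
    · rcases eq_or_lt_of_le (hψ.nonneg i none a k) with h0 | h0
      · rw [← h0]; simp
      · have hkK' : k < N.K a := by
          rcases lt_or_eq_of_le hkK with h | h
          · exact h
          · exfalso
            rw [h] at h0
            rw [hψ.cpu_last i a] at h0
            linarith
        have hle := lam_le_mdelta N hφ hlam hsuff i a k hkK hne none hkK'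
        exact mul_le_mul_of_nonneg_left hle (mul_nonneg (hs i a k) h0.le)

private lemma aterm_eq (N : SCNet V A) {φ : V → Option V → A → ℕ → ℝ}
    {t : V → A → ℕ → ℝ} {lam : V → A → ℕ → ℝ}
    (hφ : IsStrategy N φ) (hlam : IsMarginal N φ t lam) :
    Aterm N φ t lam φ t
      = ∑ a, ∑ k ∈ Finset.range (N.K a + 1), ∑ i, t i a k * lam i a k := by
  unfold Aterm
  refine Finset.sum_congr rfl fun a _ => Finset.sum_congr rfl fun k hk =>
    Finset.sum_congr rfl fun i _ => ?_
  have hkK : k ≤ N.K a := Nat.lt_succ_iff.mp (Finset.mem_range.mp hk)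
  rw [lam_formula N hφ hlam i a k hkK, mul_add, Finset.mul_sum]
  congr 1
  · exact Finset.sum_congr rfl fun j _ => by ring
  · ring

end AuxProof3
/-- **Theorem 2 (Sufficient optimality condition for service-chain forwarding and
offloading).** If `(φ,t)` is feasible for `r` and some marginal vector `λ` for
`(φ,t)` satisfies the sufficient-optimality condition, then `(φ,t)` is a global
optimum of the total-cost minimization problem. -/
theorem sufficient_optimality_service_chain
    (N : SCNet V A) (r : V → A → ℝ) (hr : ∀ i a, 0 ≤ r i a)
    (φ : V → Option V → A → ℕ → ℝ) (t : V → A → ℕ → ℝ) (lam : V → A → ℕ → ℝ)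
    (hfeas : Feasible N r φ t) (hlam : IsMarginal N φ t lam)
    (hsuff : SuffCond N φ t lam) :
    ∀ (φ' : V → Option V → A → ℕ → ℝ) (t' : V → A → ℕ → ℝ),
      Feasible N r φ' t' → totalCost N φ t ≤ totalCost N φ' t' := by
  obtain ⟨hφ, ht⟩ := hfeas
  intro φ' t' hfeas'
  obtain ⟨hφ', ht'⟩ := hfeas'
  have hSeq : Sval N φ t φ t = ∑ a, ∑ i, r i a * lam i a 0 := by
    have h1 := sval_decomp N φ t lam φ t
    have h2 := bterm_eq N hφ ht lam
    have h3 := aterm_eq N hφ hlam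
    rw [h3, h2] at h1
    linarith
  have hSge : (∑ a, ∑ i, r i a * lam i a 0) ≤ Sval N φ t φ' t' := by
    have h1 := sval_decomp N φ t lam φ' t'
    have h2 := bterm_eq N hφ' ht' lam
    have h3 := aterm_ge N hφ hlam hsuff hφ' ht'.nonneg
    rw [h2] at h1
    linarith
  have hDineq : ∀ i j : V,
      (if N.E i j then N.D i j (linkFlow N φ t i j) else 0)
        + (N.D' i j (linkFlow N φ t i j) * linkFlow N φ' t' i j
            - N.D' i j (linkFlow N φ t i j) * linkFlow N φ t i j)
      ≤ (if N.E i j then N.D i j (linkFlow N φ' t' i j) else 0) := by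
    intro i j
    by_cases hE : N.E i j
    · simp only [if_pos hE]
      have hg := grad_ineq (N.hD_conv i j hE) (N.hD_deriv i j hE)
        (linkFlow_nonneg N hφ ht.nonneg i j) (linkFlow_nonneg N hφ' ht'.nonneg i j)
      have hexp : N.D' i j (linkFlow N φ t i j)
            * (linkFlow N φ' t' i j - linkFlow N φ t i j)
          = N.D' i j (linkFlow N φ t i j) * linkFlow N φ' t' i j
            - N.D' i j (linkFlow N φ t i j) * linkFlow N φ t i j := by ring
      linarith
    · simp only [if_neg hE]
      rw [linkFlow_not_edge N hφ hE, linkFlow_not_edge N hφ' hE]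
      simp
  have hCineq : ∀ i : V,
      N.C i (workload N φ t i)
        + (N.C' i (workload N φ t i) * workload N φ' t' i
            - N.C' i (workload N φ t i) * workload N φ t i)
      ≤ N.C i (workload N φ' t' i) := by
    intro i
    have hg := grad_ineq (N.hC_conv i) (N.hC_deriv i)
      (workload_nonneg N hφ ht.nonneg i) (workload_nonneg N hφ' ht'.nonneg i)
    have hexp : N.C' i (workload N φ t i) * (workload N φ' t' i - workload N φ t i)
        = N.C' i (workload N φ t i) * workload N φ' t' i
          - N.C' i (workload N φ t i) * workload N φ t i := by ring
    linarith
  have heq : totalCost N φ t + (Sval N φ t φ' t' - Sval N φ t φ t)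
      = (∑ i, ∑ j, ((if N.E i j then N.D i j (linkFlow N φ t i j) else 0)
          + (N.D' i j (linkFlow N φ t i j) * linkFlow N φ' t' i j
              - N.D' i j (linkFlow N φ t i j) * linkFlow N φ t i j)))
        + ∑ i, (N.C i (workload N φ t i)
          + (N.C' i (workload N φ t i) * workload N φ' t' i
              - N.C' i (workload N φ t i) * workload N φ t i)) := by
    unfold totalCost Sval
    simp only [Finset.sum_add_distrib, Finset.sum_sub_distrib]
    ring
  calc totalCost N φ t
      ≤ totalCost N φ t + (Sval N φ t φ' t' - Sval N φ t φ t) := by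
        rw [hSeq]; linarith
    _ = _ := heq
    _ ≤ (∑ i, ∑ j, if N.E i j then N.D i j (linkFlow N φ' t' i j) else 0)
        + ∑ i, N.C i (workload N φ' t' i) := by
        exact add_le_add
          (Finset.sum_le_sum fun i _ => Finset.sum_le_sum fun j _ => hDineq i j)
          (Finset.sum_le_sum fun i _ => hCineq i)
    _ = totalCost N φ' t' := rfl
end

section
/- Sufficient optimality condition for single-step computations (Theorem 1): In the single-step computation model, let (φ,t⁻,t⁺) be feasible for r with marginal vectors λ⁻, λ⁺. Suppose that for every i ∈ V, every task (d,m), and every j ∈ {0} ∪ N(i): if φ⁻_{ij}(d,m) > 0 then δ⁻_{ij}(d,m) = min_{k ∈ {0}∪N(i)} δ⁻_{ik}(d,m); and for every j ∈ N(i): if φ⁺_{ij}(d,m) > 0 then δ⁺_{ij}(d,m) = min_{k ∈ N(i)} δ⁺_{ik}(d,m). Then (φ,t⁻,t⁺) is globally optimal: T(φ) ≤ T(φ†) for every triple (φ†,t⁻†,t⁺†) feasible for the same input rates r. -/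
open scoped BigOperators
open Classical

/-- The single-step computation network model: a finite directed graph, a finite set
of tasks `(d,m)` (destination, computation type), data/result packet sizes,
computation weights, and nondecreasing convex continuously differentiable link and
computation cost functions (with their derivatives). -/
structure SSNet where
  /-- the node type -/
  V : Type
  /-- the computation-type type -/
  M : Type
  fV : Fintype V
  dV : DecidableEq V
  fM : Fintype M
  /-- the edge relation -/
  E : V → V → Prop
  /-- the finite set of tasks `(d,m)` -/
  Tsk : Finset (V × M)
  /-- data packet size `L⁻_m` -/
  Lm : M → ℝ
  /-- result packet size `L⁺_m` -/
  Lp : M → ℝ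
  hLm : ∀ m, 0 < Lm m
  hLp : ∀ m, 0 < Lp m
  /-- computation weights `w_{im}` -/
  w : V → M → ℝ
  hw : ∀ i m, 0 < w i m
  /-- link cost functions -/
  D : V → V → ℝ → ℝ
  /-- derivative of the link cost functions -/
  D' : V → V → ℝ → ℝ
  /-- computation cost functions -/
  C : V → ℝ → ℝ
  /-- derivative of the computation cost functions -/
  C' : V → ℝ → ℝ
  hD_mono : ∀ i j, E i j → MonotoneOn (D i j) (Set.Ici 0)
  hD_conv : ∀ i j, E i j → ConvexOn ℝ (Set.Ici 0) (D i j)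
  hD_deriv : ∀ i j, E i j → ∀ x ∈ Set.Ici (0 : ℝ),
    HasDerivWithinAt (D i j) (D' i j x) (Set.Ici 0) x
  hD'_cont : ∀ i j, E i j → ContinuousOn (D' i j) (Set.Ici 0)
  hC_mono : ∀ i, MonotoneOn (C i) (Set.Ici 0)
  hC_conv : ∀ i, ConvexOn ℝ (Set.Ici 0) (C i)
  hC_deriv : ∀ i, ∀ x ∈ Set.Ici (0 : ℝ),
    HasDerivWithinAt (C i) (C' i x) (Set.Ici 0) x
  hC'_cont : ∀ i, ContinuousOn (C' i) (Set.Ici 0)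

/-- Sum of a real-valued function over all nodes. -/
noncomputable def SSNet.sumV (N : SSNet) (f : N.V → ℝ) : ℝ :=
  letI := N.fV
  ∑ j, f j

/-- A forwarding strategy for single-step computations: `φm i (some j) τ` (resp.
`φm i none τ`) is the fraction of data traffic of task `τ` forwarded by `i` to node
`j` (resp. to `i`'s CPU), and `φp i j τ` is the fraction of result traffic of task
`τ` forwarded by `i` to `j`. -/
structure SSStrategy (N : SSNet) (φm : N.V → Option N.V → N.V × N.M → ℝ)
    (φp : N.V → N.V → N.V × N.M → ℝ) : Prop where
  m_nonneg : ∀ i j τ, 0 ≤ φm i j τ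
  m_le_one : ∀ i j τ, φm i j τ ≤ 1
  p_nonneg : ∀ i j τ, 0 ≤ φp i j τ
  p_le_one : ∀ i j τ, φp i j τ ≤ 1
  m_no_edge : ∀ i j τ, ¬ N.E i j → φm i (some j) τ = 0
  p_no_edge : ∀ i j τ, ¬ N.E i j → φp i j τ = 0
  m_sum : ∀ i, ∀ τ ∈ N.Tsk, φm i none τ + N.sumV (fun j => φm i (some j) τ) = 1
  p_sum : ∀ i, ∀ τ ∈ N.Tsk, i ≠ τ.1 → N.sumV (fun j => φp i j τ) = 1
  p_dest : ∀ τ ∈ N.Tsk, N.sumV (fun j => φp τ.1 j τ) = 0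

/-- Traffic vectors `t⁻, t⁺` for input rates `r` and strategy `(φm,φp)`. -/
structure SSTraffic (N : SSNet) (r : N.V → N.V × N.M → ℝ)
    (φm : N.V → Option N.V → N.V × N.M → ℝ) (φp : N.V → N.V → N.V × N.M → ℝ)
    (tm tp : N.V → N.V × N.M → ℝ) : Prop where
  tm_nonneg : ∀ i τ, 0 ≤ tm i τ
  tp_nonneg : ∀ i τ, 0 ≤ tp i τ
  tm_eq : ∀ i, ∀ τ ∈ N.Tsk,
    tm i τ = r i τ + N.sumV (fun j => tm j τ * φm j (some i) τ)
  tp_eq : ∀ i, ∀ τ ∈ N.Tsk,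
    tp i τ = tm i τ * φm i none τ + N.sumV (fun j => tp j τ * φp j i τ)

/-- A feasible triple (strategy, data traffic, result traffic) for input rates `r`. -/
def SSFeasible (N : SSNet) (r : N.V → N.V × N.M → ℝ)
    (φm : N.V → Option N.V → N.V × N.M → ℝ) (φp : N.V → N.V → N.V × N.M → ℝ)
    (tm tp : N.V → N.V × N.M → ℝ) : Prop :=
  SSStrategy N φm φp ∧ SSTraffic N r φm φp tm tp

/-- Total flow (bit/sec) on link `(i,j)`. -/
noncomputable def ssF (N : SSNet) (φm : N.V → Option N.V → N.V × N.M → ℝ)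
    (φp : N.V → N.V → N.V × N.M → ℝ) (tm tp : N.V → N.V × N.M → ℝ)
    (i j : N.V) : ℝ :=
  ∑ τ ∈ N.Tsk, (N.Lm τ.2 * (tm i τ * φm i (some j) τ)
    + N.Lp τ.2 * (tp i τ * φp i j τ))

/-- Total computation workload at node `i`. -/
noncomputable def ssG (N : SSNet) (φm : N.V → Option N.V → N.V × N.M → ℝ)
    (tm : N.V → N.V × N.M → ℝ) (i : N.V) : ℝ :=
  ∑ τ ∈ N.Tsk, N.w i τ.2 * (tm i τ * φm i none τ)

/-- The aggregated communication and computation cost `T(φ)`. -/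
noncomputable def ssT (N : SSNet) (φm : N.V → Option N.V → N.V × N.M → ℝ)
    (φp : N.V → N.V → N.V × N.M → ℝ) (tm tp : N.V → N.V × N.M → ℝ) : ℝ :=
  letI := N.fV
  (∑ i, ∑ j, if N.E i j then N.D i j (ssF N φm φp tm tp i j) else 0)
    + ∑ i, N.C i (ssG N φm tm i)

/-- Marginal-cost vectors `λ⁻, λ⁺` for the triple `(φ,t⁻,t⁺)`. -/
structure SSMarginal (N : SSNet) (φm : N.V → Option N.V → N.V × N.M → ℝ)
    (φp : N.V → N.V → N.V × N.M → ℝ) (tm tp : N.V → N.V × N.M → ℝ)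
    (lm lp : N.V → N.V × N.M → ℝ) : Prop where
  lp_eq : ∀ i, ∀ τ ∈ N.Tsk,
    lp i τ = N.sumV (fun j =>
      φp i j τ * (N.Lp τ.2 * N.D' i j (ssF N φm φp tm tp i j) + lp j τ))
  lm_eq : ∀ i, ∀ τ ∈ N.Tsk,
    lm i τ = N.sumV (fun j =>
        φm i (some j) τ * (N.Lm τ.2 * N.D' i j (ssF N φm φp tm tp i j) + lm j τ))
      + φm i none τ * (N.w i τ.2 * N.C' i (ssG N φm tm i) + lp i τ)

/-- Admissible directions for data flow at node `i`: out-neighbors and the CPU. -/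
def SSAdm (N : SSNet) (i : N.V) : Option N.V → Prop
  | some j => N.E i j
  | none => True

/-- The modified data marginals `δ⁻_{ij}(d,m)`. -/
noncomputable def ssDm (N : SSNet) (φm : N.V → Option N.V → N.V × N.M → ℝ)
    (φp : N.V → N.V → N.V × N.M → ℝ) (tm tp : N.V → N.V × N.M → ℝ)
    (lm lp : N.V → N.V × N.M → ℝ) (i : N.V) (τ : N.V × N.M) :
    Option N.V → ℝ
  | some j => N.Lm τ.2 * N.D' i j (ssF N φm φp tm tp i j) + lm j τ
  | none => N.w i τ.2 * N.C' i (ssG N φm tm i) + lp i τ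

/-- The modified result marginals `δ⁺_{ij}(d,m)`. -/
noncomputable def ssDp (N : SSNet) (φm : N.V → Option N.V → N.V × N.M → ℝ)
    (φp : N.V → N.V → N.V × N.M → ℝ) (tm tp : N.V → N.V × N.M → ℝ)
    (lp : N.V → N.V × N.M → ℝ) (i j : N.V) (τ : N.V × N.M) : ℝ :=
  N.Lp τ.2 * N.D' i j (ssF N φm φp tm tp i j) + lp j τ

/-- The KKT stationarity condition for single-step computations: for data flows,
used directions minimize `t⁻_i·δ⁻_{ij}` over `{0} ∪ N(i)` and unused ones lie above
that minimum; analogously for result flows with `t⁺_i·δ⁺_{ij}` over `N(i)`. -/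
def SSKKT (N : SSNet) (φm : N.V → Option N.V → N.V × N.M → ℝ)
    (φp : N.V → N.V → N.V × N.M → ℝ) (tm tp : N.V → N.V × N.M → ℝ)
    (lm lp : N.V → N.V × N.M → ℝ) : Prop :=
  (∀ i, ∀ τ ∈ N.Tsk, ∀ j, SSAdm N i j →
    (0 < φm i j τ → ∀ j', SSAdm N i j' →
      tm i τ * ssDm N φm φp tm tp lm lp i τ j
        ≤ tm i τ * ssDm N φm φp tm tp lm lp i τ j')
    ∧ (φm i j τ = 0 → ∃ j', SSAdm N i j' ∧
      tm i τ * ssDm N φm φp tm tp lm lp i τ j'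
        ≤ tm i τ * ssDm N φm φp tm tp lm lp i τ j))
  ∧ (∀ i, ∀ τ ∈ N.Tsk, ∀ j, N.E i j →
    (0 < φp i j τ → ∀ j', N.E i j' →
      tp i τ * ssDp N φm φp tm tp lp i j τ ≤ tp i τ * ssDp N φm φp tm tp lp i j' τ)
    ∧ (φp i j τ = 0 → ∃ j', N.E i j' ∧
      tp i τ * ssDp N φm φp tm tp lp i j' τ ≤ tp i τ * ssDp N φm φp tm tp lp i j τ))


lemma tangent_line_le {f f' : ℝ → ℝ} (hc : ConvexOn ℝ (Set.Ici 0) f)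
    (hd : ∀ x ∈ Set.Ici (0:ℝ), HasDerivWithinAt f (f' x) (Set.Ici 0) x)
    {x y : ℝ} (hx : 0 ≤ x) (hy : 0 ≤ y) :
    f x + f' x * (y - x) ≤ f y := by
  rcases lt_trichotomy x y with h | h | h
  · have h1 := hc.le_slope_of_hasDerivWithinAt hx hy h (hd x hx)
    rw [slope_def_field] at h1
    have h2 : 0 < y - x := by linarith
    rw [le_div_iff₀ h2] at h1
    linarith
  · simp [h]
  · have h1 := hc.slope_le_of_hasDerivWithinAt hy hx h (hd x hx)
    rw [slope_def_field] at h1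
    have h2 : 0 < x - y := by linarith
    rw [div_le_iff₀ h2] at h1
    linarith

section Aux

variable (N : SSNet)

set_option maxHeartbeats 800000 in
/-- At the destination, λ⁺ = 0. -/
lemma ss_lp_dest {φm : N.V → Option N.V → N.V × N.M → ℝ} {φp : N.V → N.V → N.V × N.M → ℝ}
    {tm tp lm lp : N.V → N.V × N.M → ℝ}
    (hS : SSStrategy N φm φp) (hM : SSMarginal N φm φp tm tp lm lp)
    {τ : N.V × N.M} (hτ : τ ∈ N.Tsk) : lp τ.1 τ = 0 := by
  letI := N.fV
  have hz : ∀ j, φp τ.1 j τ = 0 := by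
    have h0 := hS.p_dest τ hτ
    simp only [SSNet.sumV] at h0
    intro j
    exact (Finset.sum_eq_zero_iff_of_nonneg (fun k _ => hS.p_nonneg τ.1 k τ)).mp h0 j
      (Finset.mem_univ j)
  have := hM.lp_eq τ.1 τ hτ
  simp only [SSNet.sumV] at this
  rw [this]
  exact Finset.sum_eq_zero fun j _ => by rw [hz j, zero_mul]

/-- λ⁻ is a lower bound on δ⁻ over admissible directions. -/
lemma ss_lm_le {φm : N.V → Option N.V → N.V × N.M → ℝ} {φp : N.V → N.V → N.V × N.M → ℝ}
    {tm tp lm lp : N.V → N.V × N.M → ℝ}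
    (hS : SSStrategy N φm φp) (hM : SSMarginal N φm φp tm tp lm lp)
    (hsuff_m : ∀ i, ∀ τ ∈ N.Tsk, ∀ j, SSAdm N i j → 0 < φm i j τ →
      ∀ j', SSAdm N i j' →
        ssDm N φm φp tm tp lm lp i τ j ≤ ssDm N φm φp tm tp lm lp i τ j')
    {τ : N.V × N.M} (hτ : τ ∈ N.Tsk) (i : N.V) {k : Option N.V} (hk : SSAdm N i k) :
    lm i τ ≤ ssDm N φm φp tm tp lm lp i τ k := by
  letI := N.fV
  have heq := hM.lm_eq i τ hτ
  simp only [SSNet.sumV] at heq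
  set δ := ssDm N φm φp tm tp lm lp i τ with hδ
  have hterm : ∀ x : Option N.V, φm i x τ * δ x ≤ φm i x τ * δ k := by
    intro x
    rcases eq_or_lt_of_le (hS.m_nonneg i x τ) with h0 | hpos
    · rw [← h0, zero_mul, zero_mul]
    · have hadm : SSAdm N i x := by
        cases x with
        | none => trivial
        | some j =>
          by_contra hne
          exact absurd (hS.m_no_edge i j τ hne) (ne_of_gt hpos)
      exact mul_le_mul_of_nonneg_left (hsuff_m i τ hτ x hadm hpos k hk) (le_of_lt hpos)
  have hlm : lm i τ ≤ (φm i none τ + ∑ j, φm i (some j) τ) * δ k := by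
    rw [heq]
    have h1 : φm i none τ * (N.w i τ.2 * N.C' i (ssG N φm tm i) + lp i τ)
        ≤ φm i none τ * δ k := hterm none
    have h2 : ∀ j ∈ Finset.univ, φm i (some j) τ *
        (N.Lm τ.2 * N.D' i j (ssF N φm φp tm tp i j) + lm j τ) ≤ φm i (some j) τ * δ k :=
      fun j _ => hterm (some j)
    calc _ ≤ (∑ j, φm i (some j) τ * δ k) + φm i none τ * δ k :=
            add_le_add (Finset.sum_le_sum h2) h1
      _ = _ := by rw [add_mul, Finset.sum_mul]; ring
  have hsum := hS.m_sum i τ hτ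
  simp only [SSNet.sumV] at hsum
  rw [hsum, one_mul] at hlm
  exact hlm

/-- λ⁺ is a lower bound on δ⁺ over out-edges, away from the destination. -/
lemma ss_lp_le {φm : N.V → Option N.V → N.V × N.M → ℝ} {φp : N.V → N.V → N.V × N.M → ℝ}
    {tm tp lm lp : N.V → N.V × N.M → ℝ}
    (hS : SSStrategy N φm φp) (hM : SSMarginal N φm φp tm tp lm lp)
    (hsuff_p : ∀ i, ∀ τ ∈ N.Tsk, ∀ j, N.E i j → 0 < φp i j τ →
      ∀ j', N.E i j' →
        ssDp N φm φp tm tp lp i j τ ≤ ssDp N φm φp tm tp lp i j' τ)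
    {τ : N.V × N.M} (hτ : τ ∈ N.Tsk) {i : N.V} (hi : i ≠ τ.1) {k : N.V} (hk : N.E i k) :
    lp i τ ≤ ssDp N φm φp tm tp lp i k τ := by
  letI := N.fV
  have heq := hM.lp_eq i τ hτ
  simp only [SSNet.sumV] at heq
  have hterm : ∀ j, φp i j τ * (N.Lp τ.2 * N.D' i j (ssF N φm φp tm tp i j) + lp j τ)
      ≤ φp i j τ * ssDp N φm φp tm tp lp i k τ := by
    intro j
    rcases eq_or_lt_of_le (hS.p_nonneg i j τ) with h0 | hpos
    · rw [← h0, zero_mul, zero_mul]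
    · have hedge : N.E i j := by
        by_contra hne
        exact absurd (hS.p_no_edge i j τ hne) (ne_of_gt hpos)
      exact mul_le_mul_of_nonneg_left (hsuff_p i τ hτ j hedge hpos k hk) (le_of_lt hpos)
  have hsum := hS.p_sum i τ hτ hi
  simp only [SSNet.sumV] at hsum
  calc lp i τ = ∑ j, φp i j τ * (N.Lp τ.2 * N.D' i j (ssF N φm φp tm tp i j) + lp j τ) := heq
    _ ≤ ∑ j, φp i j τ * ssDp N φm φp tm tp lp i k τ := Finset.sum_le_sum fun j _ => hterm j
    _ = (∑ j, φp i j τ) * ssDp N φm φp tm tp lp i k τ := (Finset.sum_mul _ _ _).symm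
    _ = _ := by rw [hsum, one_mul]
set_option maxHeartbeats 1600000 in
/-- The key algebraic identity: for any feasible traffic, the "surplus" of the
convex combinations over the marginals equals the linearized cost minus `∑ r·λ⁻`. -/
lemma ss_identity (a : N.V → N.V → ℝ) (c : N.V → ℝ) (lm lp : N.V → N.V × N.M → ℝ)
    {r : N.V → N.V × N.M → ℝ} {φm' : N.V → Option N.V → N.V × N.M → ℝ}
    {φp' : N.V → N.V → N.V × N.M → ℝ} {tm' tp' : N.V → N.V × N.M → ℝ}
    (hT : SSTraffic N r φm' φp' tm' tp') :
    letI := N.fV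
    ∑ τ ∈ N.Tsk, (((∑ i, tm' i τ *
        (φm' i none τ * (N.w i τ.2 * c i + lp i τ)
          + ∑ j, φm' i (some j) τ * (N.Lm τ.2 * a i j + lm j τ)))
      - ∑ i, tm' i τ * lm i τ)
      + ((∑ i, tp' i τ * ∑ j, φp' i j τ * (N.Lp τ.2 * a i j + lp j τ))
      - ∑ i, tp' i τ * lp i τ))
    = (∑ i, ∑ j, a i j * ssF N φm' φp' tm' tp' i j)
      + (∑ i, c i * ssG N φm' tm' i)
      - ∑ τ ∈ N.Tsk, ∑ i, r i τ * lm i τ := by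
  letI := N.fV
  have hR1 : (∑ i, ∑ j, a i j * ssF N φm' φp' tm' tp' i j)
      = ∑ τ ∈ N.Tsk, ∑ i, ∑ j, a i j * (N.Lm τ.2 * (tm' i τ * φm' i (some j) τ)
          + N.Lp τ.2 * (tp' i τ * φp' i j τ)) := by
    simp only [ssF, Finset.mul_sum]
    rw [show (∑ i, ∑ j, ∑ τ ∈ N.Tsk, a i j * (N.Lm τ.2 * (tm' i τ * φm' i (some j) τ)
        + N.Lp τ.2 * (tp' i τ * φp' i j τ)))
      = ∑ i, ∑ τ ∈ N.Tsk, ∑ j, a i j * (N.Lm τ.2 * (tm' i τ * φm' i (some j) τ)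
        + N.Lp τ.2 * (tp' i τ * φp' i j τ)) from
      Finset.sum_congr rfl fun i _ => Finset.sum_comm]
    exact Finset.sum_comm
  have hR2 : (∑ i, c i * ssG N φm' tm' i)
      = ∑ τ ∈ N.Tsk, ∑ i, c i * (N.w i τ.2 * (tm' i τ * φm' i none τ)) := by
    simp only [ssG, Finset.mul_sum]
    rw [Finset.sum_comm]
  rw [hR1, hR2, ← Finset.sum_add_distrib, ← Finset.sum_sub_distrib]
  refine Finset.sum_congr rfl fun τ hτ => ?_
  have hm : ∀ i, tm' i τ = r i τ + ∑ j, tm' j τ * φm' j (some i) τ := by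
    intro i; have := hT.tm_eq i τ hτ; simpa [SSNet.sumV] using this
  have hp : ∀ i, tp' i τ = tm' i τ * φm' i none τ + ∑ j, tp' j τ * φp' j i τ := by
    intro i; have := hT.tp_eq i τ hτ; simpa [SSNet.sumV] using this
  have h1 : ∑ i, tm' i τ * lm i τ = (∑ i, r i τ * lm i τ)
      + ∑ i, ∑ j, tm' i τ * φm' i (some j) τ * lm j τ := by
    calc ∑ i, tm' i τ * lm i τ
        = ∑ i, (r i τ + ∑ j, tm' j τ * φm' j (some i) τ) * lm i τ :=
          Finset.sum_congr rfl fun i _ => by rw [← hm i]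
      _ = (∑ i, r i τ * lm i τ) + ∑ i, ∑ j, tm' j τ * φm' j (some i) τ * lm i τ := by
          simp only [add_mul, Finset.sum_add_distrib, Finset.sum_mul]
      _ = _ := by rw [Finset.sum_comm]
  have h2 : ∑ i, tp' i τ * lp i τ = (∑ i, tm' i τ * φm' i none τ * lp i τ)
      + ∑ i, ∑ j, tp' i τ * φp' i j τ * lp j τ := by
    calc ∑ i, tp' i τ * lp i τ
        = ∑ i, (tm' i τ * φm' i none τ + ∑ j, tp' j τ * φp' j i τ) * lp i τ :=
          Finset.sum_congr rfl fun i _ => by rw [← hp i]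
      _ = (∑ i, tm' i τ * φm' i none τ * lp i τ)
          + ∑ i, ∑ j, tp' j τ * φp' j i τ * lp i τ := by
          simp only [add_mul, Finset.sum_add_distrib, Finset.sum_mul]
      _ = _ := by rw [Finset.sum_comm]
  have s1 : ∑ i, tm' i τ * (φm' i none τ * (N.w i τ.2 * c i + lp i τ)
        + ∑ j, φm' i (some j) τ * (N.Lm τ.2 * a i j + lm j τ))
      = (∑ i, tm' i τ * (φm' i none τ * (N.w i τ.2 * c i + lp i τ)))
        + ∑ i, ∑ j, tm' i τ * (φm' i (some j) τ * (N.Lm τ.2 * a i j + lm j τ)) := by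
    simp only [mul_add, Finset.mul_sum, Finset.sum_add_distrib]
  have s3 : ∑ i, tp' i τ * ∑ j, φp' i j τ * (N.Lp τ.2 * a i j + lp j τ)
      = ∑ i, ∑ j, tp' i τ * (φp' i j τ * (N.Lp τ.2 * a i j + lp j τ)) := by
    simp only [Finset.mul_sum]
  have sR : ∑ i, ∑ j, a i j * (N.Lm τ.2 * (tm' i τ * φm' i (some j) τ)
        + N.Lp τ.2 * (tp' i τ * φp' i j τ))
      = (∑ i, ∑ j, a i j * (N.Lm τ.2 * (tm' i τ * φm' i (some j) τ)))
        + ∑ i, ∑ j, a i j * (N.Lp τ.2 * (tp' i τ * φp' i j τ)) := by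
    simp only [mul_add, Finset.sum_add_distrib]
  have e1 : (∑ i, tm' i τ * (φm' i none τ * (N.w i τ.2 * c i + lp i τ)))
      - ∑ i, tm' i τ * φm' i none τ * lp i τ
      = ∑ i, c i * (N.w i τ.2 * (tm' i τ * φm' i none τ)) := by
    rw [← Finset.sum_sub_distrib]
    exact Finset.sum_congr rfl fun i _ => by ring
  have e2 : (∑ i, ∑ j, tm' i τ * (φm' i (some j) τ * (N.Lm τ.2 * a i j + lm j τ)))
      - ∑ i, ∑ j, tm' i τ * φm' i (some j) τ * lm j τ
      = ∑ i, ∑ j, a i j * (N.Lm τ.2 * (tm' i τ * φm' i (some j) τ)) := by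
    rw [← Finset.sum_sub_distrib]
    refine Finset.sum_congr rfl fun i _ => ?_
    rw [← Finset.sum_sub_distrib]
    exact Finset.sum_congr rfl fun j _ => by ring
  have e3 : (∑ i, ∑ j, tp' i τ * (φp' i j τ * (N.Lp τ.2 * a i j + lp j τ)))
      - ∑ i, ∑ j, tp' i τ * φp' i j τ * lp j τ
      = ∑ i, ∑ j, a i j * (N.Lp τ.2 * (tp' i τ * φp' i j τ)) := by
    rw [← Finset.sum_sub_distrib]
    refine Finset.sum_congr rfl fun i _ => ?_
    rw [← Finset.sum_sub_distrib]
    exact Finset.sum_congr rfl fun j _ => by ring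
  rw [s1, s3, sR, h1, h2]
  linarith [e1, e2, e3]
set_option maxHeartbeats 1600000 in
/-- For the reference triple the linearized cost equals `∑ r·λ⁻`. -/
lemma ss_eq {r : N.V → N.V × N.M → ℝ} {φm : N.V → Option N.V → N.V × N.M → ℝ}
    {φp : N.V → N.V → N.V × N.M → ℝ} {tm tp lm lp : N.V → N.V × N.M → ℝ}
    (hT : SSTraffic N r φm φp tm tp) (hM : SSMarginal N φm φp tm tp lm lp) :
    letI := N.fV
    (∑ i, ∑ j, N.D' i j (ssF N φm φp tm tp i j) * ssF N φm φp tm tp i j)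
      + (∑ i, N.C' i (ssG N φm tm i) * ssG N φm tm i)
    = ∑ τ ∈ N.Tsk, ∑ i, r i τ * lm i τ := by
  letI := N.fV
  have hid := ss_identity N (fun i j => N.D' i j (ssF N φm φp tm tp i j))
    (fun i => N.C' i (ssG N φm tm i)) lm lp hT
  have hz : ∑ τ ∈ N.Tsk, (((∑ i, tm i τ *
        (φm i none τ * (N.w i τ.2 * N.C' i (ssG N φm tm i) + lp i τ)
          + ∑ j, φm i (some j) τ * (N.Lm τ.2 * N.D' i j (ssF N φm φp tm tp i j) + lm j τ)))
      - ∑ i, tm i τ * lm i τ)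
      + ((∑ i, tp i τ * ∑ j, φp i j τ *
          (N.Lp τ.2 * N.D' i j (ssF N φm φp tm tp i j) + lp j τ))
      - ∑ i, tp i τ * lp i τ)) = 0 := by
    refine Finset.sum_eq_zero fun τ hτ => ?_
    have hA : ∀ i, tm i τ *
        (φm i none τ * (N.w i τ.2 * N.C' i (ssG N φm tm i) + lp i τ)
          + ∑ j, φm i (some j) τ * (N.Lm τ.2 * N.D' i j (ssF N φm φp tm tp i j) + lm j τ))
        = tm i τ * lm i τ := by
      intro i
      have := hM.lm_eq i τ hτ
      simp only [SSNet.sumV] at this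
      rw [this]; ring
    have hB : ∀ i, tp i τ * ∑ j, φp i j τ *
          (N.Lp τ.2 * N.D' i j (ssF N φm φp tm tp i j) + lp j τ)
        = tp i τ * lp i τ := by
      intro i
      have := hM.lp_eq i τ hτ
      simp only [SSNet.sumV] at this
      rw [← this]
    rw [Finset.sum_congr rfl fun i _ => hA i, Finset.sum_congr rfl fun i _ => hB i]
    ring
  rw [hz] at hid
  linarith [hid]
set_option maxHeartbeats 1600000 in
/-- For any feasible competitor, the linearized cost is at least `∑ r·λ⁻`. -/
lemma ss_ge {r : N.V → N.V × N.M → ℝ} {φm : N.V → Option N.V → N.V × N.M → ℝ}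
    {φp : N.V → N.V → N.V × N.M → ℝ} {tm tp lm lp : N.V → N.V × N.M → ℝ}
    (hS : SSStrategy N φm φp) (hM : SSMarginal N φm φp tm tp lm lp)
    (hsuff_m : ∀ i, ∀ τ ∈ N.Tsk, ∀ j, SSAdm N i j → 0 < φm i j τ →
      ∀ j', SSAdm N i j' →
        ssDm N φm φp tm tp lm lp i τ j ≤ ssDm N φm φp tm tp lm lp i τ j')
    (hsuff_p : ∀ i, ∀ τ ∈ N.Tsk, ∀ j, N.E i j → 0 < φp i j τ →
      ∀ j', N.E i j' →
        ssDp N φm φp tm tp lp i j τ ≤ ssDp N φm φp tm tp lp i j' τ)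
    {φm' : N.V → Option N.V → N.V × N.M → ℝ} {φp' : N.V → N.V → N.V × N.M → ℝ}
    {tm' tp' : N.V → N.V × N.M → ℝ}
    (hS' : SSStrategy N φm' φp') (hT' : SSTraffic N r φm' φp' tm' tp') :
    letI := N.fV
    ∑ τ ∈ N.Tsk, ∑ i, r i τ * lm i τ
      ≤ (∑ i, ∑ j, N.D' i j (ssF N φm φp tm tp i j) * ssF N φm' φp' tm' tp' i j)
        + ∑ i, N.C' i (ssG N φm tm i) * ssG N φm' tm' i := by
  letI := N.fV
  have hid := ss_identity N (fun i j => N.D' i j (ssF N φm φp tm tp i j))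
    (fun i => N.C' i (ssG N φm tm i)) lm lp hT'
  have hz : 0 ≤ ∑ τ ∈ N.Tsk, (((∑ i, tm' i τ *
        (φm' i none τ * (N.w i τ.2 * N.C' i (ssG N φm tm i) + lp i τ)
          + ∑ j, φm' i (some j) τ * (N.Lm τ.2 * N.D' i j (ssF N φm φp tm tp i j) + lm j τ)))
      - ∑ i, tm' i τ * lm i τ)
      + ((∑ i, tp' i τ * ∑ j, φp' i j τ *
          (N.Lp τ.2 * N.D' i j (ssF N φm φp tm tp i j) + lp j τ))
      - ∑ i, tp' i τ * lp i τ)) := by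
    refine Finset.sum_nonneg fun τ hτ => ?_
    have hA : ∀ i, tm' i τ * lm i τ ≤ tm' i τ *
        (φm' i none τ * (N.w i τ.2 * N.C' i (ssG N φm tm i) + lp i τ)
          + ∑ j, φm' i (some j) τ * (N.Lm τ.2 * N.D' i j (ssF N φm φp tm tp i j) + lm j τ)) := by
      intro i
      refine mul_le_mul_of_nonneg_left ?_ (hT'.tm_nonneg i τ)
      have hterm : ∀ x : Option N.V, φm' i x τ * lm i τ ≤ φm' i x τ *
          ssDm N φm φp tm tp lm lp i τ x := by
        intro x
        rcases eq_or_lt_of_le (hS'.m_nonneg i x τ) with h0 | hpos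
        · rw [← h0, zero_mul, zero_mul]
        · have hadm : SSAdm N i x := by
            cases x with
            | none => trivial
            | some j =>
              by_contra hne
              exact absurd (hS'.m_no_edge i j τ hne) (ne_of_gt hpos)
          exact mul_le_mul_of_nonneg_left (ss_lm_le N hS hM hsuff_m hτ i hadm) (le_of_lt hpos)
      have hsum := hS'.m_sum i τ hτ
      simp only [SSNet.sumV] at hsum
      calc lm i τ = (φm' i none τ + ∑ j, φm' i (some j) τ) * lm i τ := by
            rw [hsum, one_mul]
        _ = φm' i none τ * lm i τ + ∑ j, φm' i (some j) τ * lm i τ := by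
            rw [add_mul, Finset.sum_mul]
        _ ≤ _ := add_le_add (hterm none) (Finset.sum_le_sum fun j _ => hterm (some j))
    have hB : ∀ i, tp' i τ * lp i τ ≤ tp' i τ * ∑ j, φp' i j τ *
        (N.Lp τ.2 * N.D' i j (ssF N φm φp tm tp i j) + lp j τ) := by
      intro i
      refine mul_le_mul_of_nonneg_left ?_ (hT'.tp_nonneg i τ)
      by_cases hdest : i = τ.1
      · have hz0 : ∀ j, φp' i j τ = 0 := by
          have h0 := hS'.p_dest τ hτ
          simp only [SSNet.sumV] at h0
          intro j
          rw [hdest]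
          exact (Finset.sum_eq_zero_iff_of_nonneg
            (fun k _ => hS'.p_nonneg τ.1 k τ)).mp h0 j (Finset.mem_univ j)
        have hlp0 : lp i τ = 0 := by rw [hdest]; exact ss_lp_dest N hS hM hτ
        rw [hlp0]
        refine Finset.sum_nonneg fun j _ => ?_
        rw [hz0 j, zero_mul]
      · have hterm : ∀ j, φp' i j τ * lp i τ ≤ φp' i j τ *
            (N.Lp τ.2 * N.D' i j (ssF N φm φp tm tp i j) + lp j τ) := by
          intro j
          rcases eq_or_lt_of_le (hS'.p_nonneg i j τ) with h0 | hpos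
          · rw [← h0, zero_mul, zero_mul]
          · have hedge : N.E i j := by
              by_contra hne
              exact absurd (hS'.p_no_edge i j τ hne) (ne_of_gt hpos)
            exact mul_le_mul_of_nonneg_left
              (ss_lp_le N hS hM hsuff_p hτ hdest hedge) (le_of_lt hpos)
        have hsum := hS'.p_sum i τ hτ hdest
        simp only [SSNet.sumV] at hsum
        calc lp i τ = (∑ j, φp' i j τ) * lp i τ := by rw [hsum, one_mul]
          _ = ∑ j, φp' i j τ * lp i τ := Finset.sum_mul _ _ _
          _ ≤ _ := Finset.sum_le_sum fun j _ => hterm j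
    have h1 : ∑ i, tm' i τ * lm i τ ≤ ∑ i, tm' i τ *
        (φm' i none τ * (N.w i τ.2 * N.C' i (ssG N φm tm i) + lp i τ)
          + ∑ j, φm' i (some j) τ * (N.Lm τ.2 * N.D' i j (ssF N φm φp tm tp i j) + lm j τ)) :=
      Finset.sum_le_sum fun i _ => hA i
    have h2 : ∑ i, tp' i τ * lp i τ ≤ ∑ i, tp' i τ * ∑ j, φp' i j τ *
        (N.Lp τ.2 * N.D' i j (ssF N φm φp tm tp i j) + lp j τ) :=
      Finset.sum_le_sum fun i _ => hB i
    linarith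
  linarith [hid, hz]
lemma ss_F_nonneg {r : N.V → N.V × N.M → ℝ} {φm : N.V → Option N.V → N.V × N.M → ℝ}
    {φp : N.V → N.V → N.V × N.M → ℝ} {tm tp : N.V → N.V × N.M → ℝ}
    (hS : SSStrategy N φm φp) (hT : SSTraffic N r φm φp tm tp) (i j : N.V) :
    0 ≤ ssF N φm φp tm tp i j := by
  refine Finset.sum_nonneg fun τ _ => add_nonneg ?_ ?_
  · exact mul_nonneg (le_of_lt (N.hLm τ.2))
      (mul_nonneg (hT.tm_nonneg i τ) (hS.m_nonneg i (some j) τ))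
  · exact mul_nonneg (le_of_lt (N.hLp τ.2))
      (mul_nonneg (hT.tp_nonneg i τ) (hS.p_nonneg i j τ))

lemma ss_F_zero {r : N.V → N.V × N.M → ℝ} {φm : N.V → Option N.V → N.V × N.M → ℝ}
    {φp : N.V → N.V → N.V × N.M → ℝ} {tm tp : N.V → N.V × N.M → ℝ}
    (hS : SSStrategy N φm φp) (hT : SSTraffic N r φm φp tm tp) {i j : N.V}
    (h : ¬ N.E i j) : ssF N φm φp tm tp i j = 0 := by
  refine Finset.sum_eq_zero fun τ _ => ?_
  rw [hS.m_no_edge i j τ h, hS.p_no_edge i j τ h]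
  ring

lemma ss_G_nonneg {r : N.V → N.V × N.M → ℝ} {φm : N.V → Option N.V → N.V × N.M → ℝ}
    {φp : N.V → N.V → N.V × N.M → ℝ} {tm tp : N.V → N.V × N.M → ℝ}
    (hS : SSStrategy N φm φp) (hT : SSTraffic N r φm φp tm tp) (i : N.V) :
    0 ≤ ssG N φm tm i :=
  Finset.sum_nonneg fun τ _ => mul_nonneg (le_of_lt (N.hw i τ.2))
    (mul_nonneg (hT.tm_nonneg i τ) (hS.m_nonneg i none τ))


end Aux

/-- **Theorem 1 (Sufficient optimality condition for single-step computations).**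
If `(φ,t⁻,t⁺)` is feasible for `r` with marginal vectors `λ⁻, λ⁺`, and every used
data direction minimizes `δ⁻` over `{0} ∪ N(i)` while every used result direction
minimizes `δ⁺` over `N(i)`, then `(φ,t⁻,t⁺)` is globally optimal. -/
theorem sufficient_optimality_single_step
    (N : SSNet) (r : N.V → N.V × N.M → ℝ) (hr : ∀ i τ, 0 ≤ r i τ)
    (φm : N.V → Option N.V → N.V × N.M → ℝ) (φp : N.V → N.V → N.V × N.M → ℝ)
    (tm tp : N.V → N.V × N.M → ℝ) (lm lp : N.V → N.V × N.M → ℝ)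
    (hfeas : SSFeasible N r φm φp tm tp)
    (hlam : SSMarginal N φm φp tm tp lm lp)
    (hsuff_m : ∀ i, ∀ τ ∈ N.Tsk, ∀ j, SSAdm N i j → 0 < φm i j τ →
      ∀ j', SSAdm N i j' →
        ssDm N φm φp tm tp lm lp i τ j ≤ ssDm N φm φp tm tp lm lp i τ j')
    (hsuff_p : ∀ i, ∀ τ ∈ N.Tsk, ∀ j, N.E i j → 0 < φp i j τ →
      ∀ j', N.E i j' →
        ssDp N φm φp tm tp lp i j τ ≤ ssDp N φm φp tm tp lp i j' τ) :
    ∀ (φm' : N.V → Option N.V → N.V × N.M → ℝ) (φp' : N.V → N.V → N.V × N.M → ℝ)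
      (tm' tp' : N.V → N.V × N.M → ℝ),
      SSFeasible N r φm' φp' tm' tp' →
      ssT N φm φp tm tp ≤ ssT N φm' φp' tm' tp' := by
  intro φm' φp' tm' tp' hfeas'
  obtain ⟨hS, hT⟩ := hfeas
  obtain ⟨hS', hT'⟩ := hfeas'
  letI := N.fV
  have keq := ss_eq N hT hlam
  have key := ss_ge N hS hlam hsuff_m hsuff_p hS' hT'
  have hFnn : ∀ i j, 0 ≤ ssF N φm φp tm tp i j := ss_F_nonneg N hS hT
  have hF'nn : ∀ i j, 0 ≤ ssF N φm' φp' tm' tp' i j := ss_F_nonneg N hS' hT'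
  have hGnn : ∀ i, 0 ≤ ssG N φm tm i := ss_G_nonneg N hS hT
  have hG'nn : ∀ i, 0 ≤ ssG N φm' tm' i := ss_G_nonneg N hS' hT'
  have tangentD : ∀ i j,
      (if N.E i j then N.D i j (ssF N φm φp tm tp i j) else 0)
        + N.D' i j (ssF N φm φp tm tp i j)
          * (ssF N φm' φp' tm' tp' i j - ssF N φm φp tm tp i j)
      ≤ (if N.E i j then N.D i j (ssF N φm' φp' tm' tp' i j) else 0) := by
    intro i j
    by_cases h : N.E i j
    · simp only [if_pos h]
      exact tangent_line_le (N.hD_conv i j h) (N.hD_deriv i j h) (hFnn i j) (hF'nn i j)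
    · simp only [if_neg h]
      rw [ss_F_zero N hS hT h, ss_F_zero N hS' hT' h]
      simp
  have tangentC : ∀ i,
      N.C i (ssG N φm tm i) + N.C' i (ssG N φm tm i) * (ssG N φm' tm' i - ssG N φm tm i)
      ≤ N.C i (ssG N φm' tm' i) := fun i =>
    tangent_line_le (N.hC_conv i) (N.hC_deriv i) (hGnn i) (hG'nn i)
  have hsum1 : ∑ i, ∑ j, ((if N.E i j then N.D i j (ssF N φm φp tm tp i j) else 0)
        + N.D' i j (ssF N φm φp tm tp i j)
          * (ssF N φm' φp' tm' tp' i j - ssF N φm φp tm tp i j))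
      ≤ ∑ i, ∑ j, (if N.E i j then N.D i j (ssF N φm' φp' tm' tp' i j) else 0) :=
    Finset.sum_le_sum fun i _ => Finset.sum_le_sum fun j _ => tangentD i j
  have hsum2 : ∑ i, (N.C i (ssG N φm tm i)
        + N.C' i (ssG N φm tm i) * (ssG N φm' tm' i - ssG N φm tm i))
      ≤ ∑ i, N.C i (ssG N φm' tm' i) :=
    Finset.sum_le_sum fun i _ => tangentC i
  have split1 : ∑ i, ∑ j, ((if N.E i j then N.D i j (ssF N φm φp tm tp i j) else 0)
        + N.D' i j (ssF N φm φp tm tp i j)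
          * (ssF N φm' φp' tm' tp' i j - ssF N φm φp tm tp i j))
      = (∑ i, ∑ j, (if N.E i j then N.D i j (ssF N φm φp tm tp i j) else 0))
        + ((∑ i, ∑ j, N.D' i j (ssF N φm φp tm tp i j) * ssF N φm' φp' tm' tp' i j)
          - ∑ i, ∑ j, N.D' i j (ssF N φm φp tm tp i j) * ssF N φm φp tm tp i j) := by
    simp only [mul_sub, Finset.sum_add_distrib, Finset.sum_sub_distrib]
  have split2 : ∑ i, (N.C i (ssG N φm tm i)
        + N.C' i (ssG N φm tm i) * (ssG N φm' tm' i - ssG N φm tm i))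
      = (∑ i, N.C i (ssG N φm tm i))
        + ((∑ i, N.C' i (ssG N φm tm i) * ssG N φm' tm' i)
          - ∑ i, N.C' i (ssG N φm tm i) * ssG N φm tm i) := by
    simp only [mul_sub, Finset.sum_add_distrib, Finset.sum_sub_distrib]
  rw [split1] at hsum1
  rw [split2] at hsum2
  show (∑ i, ∑ j, if N.E i j then N.D i j (ssF N φm φp tm tp i j) else 0)
      + ∑ i, N.C i (ssG N φm tm i)
    ≤ (∑ i, ∑ j, if N.E i j then N.D i j (ssF N φm' φp' tm' tp' i j) else 0)
      + ∑ i, N.C i (ssG N φm' tm' i)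
  linarith [keq, key, hsum1, hsum2]
end

section
/- Sufficiency of KKT under strictly positive traffic (Proposition: positive input): In the service-chain model, let (φ,t) be feasible for r with a marginal vector λ, and suppose t_i(a,k) > 0 for every i ∈ V and every stage (a,k). If φ satisfies the KKT stationarity condition — for every i, stage (a,k) and admissible j: φ_{ij}(a,k) > 0 implies t_i(a,k)·δ_{ij}(a,k) = min over admissible j′ of t_i(a,k)·δ_{ij′}(a,k) — then (φ,t) is globally optimal: T(φ,t) ≤ T(φ′,t′) for every pair (φ′,t′) feasible for r. -/
open scoped BigOperators
open Classical

variable {V A : Type} [Fintype V] [DecidableEq V] [Fintype A]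

section AuxKKT
open Topology Filter


lemma convex_grad_ineq {f g : ℝ → ℝ} (hconv : ConvexOn ℝ (Set.Ici 0) f)
    (hderiv : ∀ x ∈ Set.Ici (0:ℝ), HasDerivWithinAt f (g x) (Set.Ici 0) x)
    {x y : ℝ} (hx : 0 ≤ x) (hy : 0 ≤ y) :
    f x + g x * (y - x) ≤ f y := by
  have hne : (𝓝[(Set.Ici 0 : Set ℝ) \ {x}] x).NeBot := by
    refine Filter.neBot_of_le (f := 𝓝[Set.Ioi x] x) ?_
    exact nhdsWithin_mono _ (fun z hz => ⟨le_trans hx (le_of_lt hz), ne_of_gt hz⟩)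
  have htend : Filter.Tendsto (slope f x) (𝓝[(Set.Ici 0 : Set ℝ) \ {x}] x) (𝓝 (g x)) :=
    (hasDerivWithinAt_iff_tendsto_slope).1 (hderiv x hx)
  rcases lt_trichotomy x y with hxy | rfl | hyx
  · -- x < y : g x ≤ slope f x y
    have hbound : g x ≤ slope f x y := by
      refine le_of_tendsto htend ?_
      filter_upwards [nhdsWithin_le_nhds (Iio_mem_nhds hxy), self_mem_nhdsWithin]
        with z hz hz'
      have := hconv.secant_mono hx hz'.1 hy hz'.2 (ne_of_gt hxy) (le_of_lt hz)
      simpa [slope_def_field] using this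
    rw [slope_def_field] at hbound
    have h1 : g x * (y - x) ≤ f y - f x := by
      have hpos : 0 < y - x := by linarith
      calc g x * (y - x) ≤ (f y - f x) / (y - x) * (y - x) := by
            exact mul_le_mul_of_nonneg_right hbound (le_of_lt hpos)
        _ = f y - f x := div_mul_cancel₀ _ (ne_of_gt hpos)
    linarith
  · simp
  · -- y < x : slope f x y ≤ g x
    have hbound : slope f x y ≤ g x := by
      refine ge_of_tendsto htend ?_
      filter_upwards [nhdsWithin_le_nhds (Ioi_mem_nhds hyx), self_mem_nhdsWithin]
        with z hz hz'
      have := hconv.secant_mono hx hy hz'.1 (ne_of_lt hyx) hz'.2 (le_of_lt hz)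
      simpa [slope_def_field] using this
    rw [slope_def_field] at hbound
    have hneg : y - x < 0 := by linarith
    have h1 : g x * (y - x) ≤ f y - f x := by
      have := mul_le_mul_of_nonpos_right hbound (le_of_lt hneg)
      calc g x * (y - x) ≤ (f y - f x) / (y - x) * (y - x) := this
        _ = f y - f x := div_mul_cancel₀ _ (ne_of_lt hneg)
    linarith

variable {N : SCNet V A} {r : V → A → ℝ} {φ : V → Option V → A → ℕ → ℝ}
  {t : V → A → ℕ → ℝ} {lam : V → A → ℕ → ℝ}

lemma linkFlow_nonneg_s5 (hφ : IsStrategy N φ) (ht : ∀ i a k, 0 ≤ t i a k) (i j : V) :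
    0 ≤ linkFlow N φ t i j := by
  refine Finset.sum_nonneg fun a _ => Finset.sum_nonneg fun k hk => ?_
  have hk' : k ≤ N.K a := Nat.lt_succ_iff.mp (Finset.mem_range.mp hk)
  exact mul_nonneg (le_of_lt (N.hL a k hk')) (mul_nonneg (ht i a k) (hφ.nonneg _ _ _ _))

lemma workload_nonneg_s5 (hφ : IsStrategy N φ) (ht : ∀ i a k, 0 ≤ t i a k) (i : V) :
    0 ≤ workload N φ t i := by
  refine Finset.sum_nonneg fun a _ => Finset.sum_nonneg fun k hk => ?_
  have hk' : k ≤ N.K a := Nat.lt_succ_iff.mp (Finset.mem_range.mp hk)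
  exact mul_nonneg (le_of_lt (N.hw i a k hk')) (mul_nonneg (ht i a k) (hφ.nonneg _ _ _ _))

lemma linkFlow_no_edge (hφ : IsStrategy N φ) {i j : V} (h : ¬ N.E i j) :
    linkFlow N φ t i j = 0 := by
  refine Finset.sum_eq_zero fun a _ => Finset.sum_eq_zero fun k _ => ?_
  rw [hφ.no_edge i j a k h]; ring

lemma phi_dest_zero (hφ : IsStrategy N φ) (a : A) (j : Option V) :
    φ (N.dest a) j a (N.K a) = 0 := by
  have hsum := hφ.sum_dest a
  have h1 : φ (N.dest a) none a (N.K a) = 0 ∧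
      ∑ j', φ (N.dest a) (some j') a (N.K a) = 0 := by
    constructor <;> nlinarith [hφ.nonneg (N.dest a) none a (N.K a),
      Finset.sum_nonneg (fun j' (_ : j' ∈ Finset.univ) => hφ.nonneg (N.dest a) (some j') a (N.K a))]
  cases j with
  | none => exact h1.1
  | some j' =>
    have := (Finset.sum_eq_zero_iff_of_nonneg
      (fun j'' _ => hφ.nonneg (N.dest a) (some j'') a (N.K a))).1 h1.2 j' (Finset.mem_univ _)
    exact this

lemma lam_dest_last (hφ : IsStrategy N φ) (hlam : IsMarginal N φ t lam) (a : A) :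
    lam (N.dest a) a (N.K a) = 0 := by
  rw [hlam.last]
  refine Finset.sum_eq_zero fun j _ => ?_
  rw [phi_dest_zero hφ a (some j)]; ring

lemma lam_row (hφ : IsStrategy N φ) (hlam : IsMarginal N φ t lam)
    (i : V) (a : A) (k : ℕ) (hk : k ≤ N.K a) :
    lam i a k = (∑ j, φ i (some j) a k * mdelta N φ t lam i a k (some j))
      + φ i none a k * mdelta N φ t lam i a k none := by
  rcases lt_or_eq_of_le hk with hlt | rfl
  · simpa [mdelta] using hlam.step i a k hlt
  · rw [hφ.cpu_last i a]
    simpa [mdelta] using hlam.last i a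

lemma lam_le (hφ : IsStrategy N φ) (hlam : IsMarginal N φ t lam)
    (hpos : ∀ i a k, k ≤ N.K a → 0 < t i a k)
    (hkkt : ∀ i a k, k ≤ N.K a → ∀ j, Admissible N i a k j → 0 < φ i j a k →
      ∀ j', Admissible N i a k j' →
        t i a k * mdelta N φ t lam i a k j ≤ t i a k * mdelta N φ t lam i a k j')
    (i : V) (a : A) (k : ℕ) (hk : k ≤ N.K a) (hnd : ¬(i = N.dest a ∧ k = N.K a))
    (j' : Option V) (hadm' : Admissible N i a k j') :
    lam i a k ≤ mdelta N φ t lam i a k j' := by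
  have hrow := lam_row hφ hlam i a k hk
  have hsum := hφ.sum_one i a k hk hnd
  -- each used direction has mdelta ≤ mdelta j'
  have hterm : ∀ j : Option V, φ i j a k * mdelta N φ t lam i a k j
      ≤ φ i j a k * mdelta N φ t lam i a k j' := by
    intro j
    rcases eq_or_lt_of_le (hφ.nonneg i j a k) with h0 | hgt
    · rw [← h0]; simp
    · have hadm : Admissible N i a k j := by
        cases j with
        | some jj =>
          by_contra hne
          exact absurd (hφ.no_edge i jj a k hne) (ne_of_gt hgt)
        | none =>
          show k < N.K a
          rcases lt_or_eq_of_le hk with h | rfl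
          · exact h
          · exact absurd (hφ.cpu_last i a) (ne_of_gt hgt)
      have := hkkt i a k hk j hadm hgt j' hadm'
      have htpos := hpos i a k hk
      have hdel := le_of_mul_le_mul_left this htpos
      exact mul_le_mul_of_nonneg_left hdel (hφ.nonneg i j a k)
  calc lam i a k = (∑ j, φ i (some j) a k * mdelta N φ t lam i a k (some j))
        + φ i none a k * mdelta N φ t lam i a k none := hrow
    _ ≤ (∑ j, φ i (some j) a k * mdelta N φ t lam i a k j')
        + φ i none a k * mdelta N φ t lam i a k j' := by
        exact add_le_add (Finset.sum_le_sum fun j _ => hterm (some j)) (hterm none)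
    _ = (φ i none a k + ∑ j, φ i (some j) a k) * mdelta N φ t lam i a k j' := by
        rw [← Finset.sum_mul]; ring
    _ = mdelta N φ t lam i a k j' := by rw [hsum]; ring

/-- Claim B: per-stage identity for the optimal pair. -/
lemma row_eq (hφ : IsStrategy N φ) (hlam : IsMarginal N φ t lam)
    (i : V) (a : A) (k : ℕ) (hk : k ≤ N.K a) :
    (∑ j, t i a k * φ i (some j) a k * mdelta N φ t lam i a k (some j))
      + t i a k * φ i none a k * mdelta N φ t lam i a k none
    = t i a k * lam i a k := by
  rw [lam_row hφ hlam i a k hk, mul_add, Finset.mul_sum]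
  congr 1
  · exact Finset.sum_congr rfl fun j _ => by ring
  · ring

/-- Claim C: per-stage inequality for an arbitrary feasible pair. -/
lemma row_le (hφ : IsStrategy N φ) (hlam : IsMarginal N φ t lam)
    (hpos : ∀ i a k, k ≤ N.K a → 0 < t i a k)
    (hkkt : ∀ i a k, k ≤ N.K a → ∀ j, Admissible N i a k j → 0 < φ i j a k →
      ∀ j', Admissible N i a k j' →
        t i a k * mdelta N φ t lam i a k j ≤ t i a k * mdelta N φ t lam i a k j')
    {φ' : V → Option V → A → ℕ → ℝ} {t' : V → A → ℕ → ℝ}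
    (hφ' : IsStrategy N φ') (ht' : ∀ i a k, 0 ≤ t' i a k)
    (i : V) (a : A) (k : ℕ) (hk : k ≤ N.K a) :
    t' i a k * lam i a k
      ≤ (∑ j, t' i a k * φ' i (some j) a k * mdelta N φ t lam i a k (some j))
        + t' i a k * φ' i none a k * mdelta N φ t lam i a k none := by
  by_cases hnd : i = N.dest a ∧ k = N.K a
  · obtain ⟨rfl, rfl⟩ := hnd
    rw [lam_dest_last hφ hlam a]
    have hz : ∀ j : Option V, φ' (N.dest a) j a (N.K a) = 0 := phi_dest_zero hφ' a
    rw [hz none]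
    have : (∑ j, t' (N.dest a) a (N.K a) * φ' (N.dest a) (some j) a (N.K a) *
        mdelta N φ t lam (N.dest a) a (N.K a) (some j)) = 0 :=
      Finset.sum_eq_zero fun j _ => by rw [hz (some j)]; ring
    rw [this]; simp
  · have hterm : ∀ j : Option V,
        t' i a k * φ' i j a k * lam i a k ≤ t' i a k * φ' i j a k * mdelta N φ t lam i a k j := by
      intro j
      rcases eq_or_lt_of_le (hφ'.nonneg i j a k) with h0 | hgt
      · rw [← h0]; simp
      · have hadm : Admissible N i a k j := by
          cases j with
          | some jj =>
            by_contra hne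
            exact absurd (hφ'.no_edge i jj a k hne) (ne_of_gt hgt)
          | none =>
            show k < N.K a
            rcases lt_or_eq_of_le hk with h | rfl
            · exact h
            · exact absurd (hφ'.cpu_last i a) (ne_of_gt hgt)
        exact mul_le_mul_of_nonneg_left (lam_le hφ hlam hpos hkkt i a k hk hnd j hadm)
          (mul_nonneg (ht' i a k) (le_of_lt hgt))
    have hsum := hφ'.sum_one i a k hk hnd
    have hsplit : t' i a k * lam i a k
        = (∑ j, t' i a k * φ' i (some j) a k * lam i a k)
          + t' i a k * φ' i none a k * lam i a k := by
      have h1 : (∑ j, t' i a k * φ' i (some j) a k * lam i a k)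
          = t' i a k * lam i a k * ∑ j, φ' i (some j) a k := by
        rw [Finset.mul_sum]; exact Finset.sum_congr rfl fun j _ => by ring
      rw [h1]; linear_combination (- t' i a k * lam i a k) * hsum
    rw [hsplit]
    exact add_le_add (Finset.sum_le_sum fun j _ => hterm (some j)) (hterm none)

lemma telescope_a {φ' : V → Option V → A → ℕ → ℝ} {t' : V → A → ℕ → ℝ}
    (hφ' : IsStrategy N φ') (ht' : IsTraffic N r φ' t') (a : A) :
    ∑ k ∈ Finset.range (N.K a + 1), ∑ i,
      ((∑ j, t' i a k * φ' i (some j) a k * lam j a k)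
        + t' i a k * φ' i none a k * lam i a (k + 1))
    = (∑ k ∈ Finset.range (N.K a + 1), ∑ i, t' i a k * lam i a k)
      - ∑ i, r i a * lam i a 0 := by
  set P : ℕ → ℝ := fun k => ∑ i, ∑ j, t' i a k * φ' i (some j) a k * lam j a k with hP
  set Q : ℕ → ℝ := fun k => ∑ i, t' i a k * φ' i none a k * lam i a (k + 1) with hQ
  set T : ℕ → ℝ := fun k => ∑ i, t' i a k * lam i a k with hT
  have hsplit : ∑ k ∈ Finset.range (N.K a + 1), ∑ i,
      ((∑ j, t' i a k * φ' i (some j) a k * lam j a k)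
        + t' i a k * φ' i none a k * lam i a (k + 1))
      = (∑ k ∈ Finset.range (N.K a + 1), P k) + ∑ k ∈ Finset.range (N.K a + 1), Q k := by
    rw [← Finset.sum_add_distrib]
    exact Finset.sum_congr rfl fun k _ => by simp only [hP, hQ]; rw [← Finset.sum_add_distrib]
  rw [hsplit]
  -- inflow identities
  have hcol : ∀ k, P k = ∑ j, (∑ i, t' i a k * φ' i (some j) a k) * lam j a k := by
    intro k
    simp only [hP]
    rw [Finset.sum_comm]
    exact Finset.sum_congr rfl fun j _ => by rw [Finset.sum_mul]
  have hP0 : P 0 = T 0 - ∑ i, r i a * lam i a 0 := by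
    rw [hcol 0]; simp only [hT]; rw [← Finset.sum_sub_distrib]
    refine Finset.sum_congr rfl fun j _ => ?_
    have hbase := ht'.base j a
    have : ∑ i, t' i a 0 * φ' i (some j) a 0 = t' j a 0 - r j a := by linarith
    rw [this]; ring
  have hPsucc : ∀ k ∈ Finset.range (N.K a), P (k + 1) = T (k + 1) - Q k := by
    intro k hk
    have hkK : k + 1 ≤ N.K a := Nat.succ_le_of_lt (Finset.mem_range.mp hk)
    rw [hcol (k + 1)]; simp only [hT, hQ]; rw [← Finset.sum_sub_distrib]
    refine Finset.sum_congr rfl fun j _ => ?_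
    have hstep := ht'.step j a (k + 1) (Nat.le_add_left 1 k) hkK
    simp only [Nat.add_sub_cancel] at hstep
    have : ∑ i, t' i a (k + 1) * φ' i (some j) a (k + 1)
        = t' j a (k + 1) - t' j a k * φ' j none a k := by linarith
    rw [this]; ring
  have hQK : Q (N.K a) = 0 := by
    simp only [hQ]
    exact Finset.sum_eq_zero fun i _ => by rw [hφ'.cpu_last i a]; ring
  rw [Finset.sum_range_succ' P, Finset.sum_range_succ Q, hQK, hP0,
      Finset.sum_congr rfl hPsucc, Finset.sum_sub_distrib,
      Finset.sum_range_succ' T]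
  ring

lemma linE_eq (φ'' : V → Option V → A → ℕ → ℝ) (t'' : V → A → ℕ → ℝ) :
    ∑ a, ∑ k ∈ Finset.range (N.K a + 1), ∑ i,
      ((∑ j, t'' i a k * φ'' i (some j) a k * (N.L a k * N.D' i j (linkFlow N φ t i j)))
        + t'' i a k * φ'' i none a k * (N.w i a k * N.C' i (workload N φ t i)))
    = (∑ i, ∑ j, N.D' i j (linkFlow N φ t i j) * linkFlow N φ'' t'' i j)
      + ∑ i, N.C' i (workload N φ t i) * workload N φ'' t'' i := by
  have hlinkpart :
      (∑ i, ∑ j, N.D' i j (linkFlow N φ t i j) * linkFlow N φ'' t'' i j)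
      = ∑ a, ∑ k ∈ Finset.range (N.K a + 1), ∑ i, ∑ j,
          t'' i a k * φ'' i (some j) a k * (N.L a k * N.D' i j (linkFlow N φ t i j)) := by
    calc ∑ i, ∑ j, N.D' i j (linkFlow N φ t i j) * linkFlow N φ'' t'' i j
        = ∑ i, ∑ j, ∑ a, ∑ k ∈ Finset.range (N.K a + 1),
            t'' i a k * φ'' i (some j) a k * (N.L a k * N.D' i j (linkFlow N φ t i j)) := by
          refine Finset.sum_congr rfl fun i _ => Finset.sum_congr rfl fun j _ => ?_
          have hexp : linkFlow N φ'' t'' i j = ∑ a, ∑ k ∈ Finset.range (N.K a + 1),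
              N.L a k * (t'' i a k * φ'' i (some j) a k) := rfl
          rw [hexp, Finset.mul_sum]
          refine Finset.sum_congr rfl fun a _ => ?_
          rw [Finset.mul_sum]
          exact Finset.sum_congr rfl fun k _ => by ring
      _ = ∑ i, ∑ a, ∑ j, ∑ k ∈ Finset.range (N.K a + 1), _ :=
          Finset.sum_congr rfl fun i _ => Finset.sum_comm
      _ = ∑ a, ∑ i, ∑ j, ∑ k ∈ Finset.range (N.K a + 1), _ := Finset.sum_comm
      _ = ∑ a, ∑ i, ∑ k ∈ Finset.range (N.K a + 1), ∑ j, _ :=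
          Finset.sum_congr rfl fun a _ => Finset.sum_congr rfl fun i _ => Finset.sum_comm
      _ = ∑ a, ∑ k ∈ Finset.range (N.K a + 1), ∑ i, ∑ j,
            t'' i a k * φ'' i (some j) a k * (N.L a k * N.D' i j (linkFlow N φ t i j)) :=
          Finset.sum_congr rfl fun a _ => Finset.sum_comm
  have hcpupart :
      (∑ i, N.C' i (workload N φ t i) * workload N φ'' t'' i)
      = ∑ a, ∑ k ∈ Finset.range (N.K a + 1), ∑ i,
          t'' i a k * φ'' i none a k * (N.w i a k * N.C' i (workload N φ t i)) := by
    calc ∑ i, N.C' i (workload N φ t i) * workload N φ'' t'' i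
        = ∑ i, ∑ a, ∑ k ∈ Finset.range (N.K a + 1),
            t'' i a k * φ'' i none a k * (N.w i a k * N.C' i (workload N φ t i)) := by
          refine Finset.sum_congr rfl fun i _ => ?_
          have hexp : workload N φ'' t'' i = ∑ a, ∑ k ∈ Finset.range (N.K a + 1),
              N.w i a k * (t'' i a k * φ'' i none a k) := rfl
          rw [hexp, Finset.mul_sum]
          refine Finset.sum_congr rfl fun a _ => ?_
          rw [Finset.mul_sum]
          exact Finset.sum_congr rfl fun k _ => by ring
      _ = ∑ a, ∑ i, ∑ k ∈ Finset.range (N.K a + 1), _ := Finset.sum_comm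
      _ = ∑ a, ∑ k ∈ Finset.range (N.K a + 1), ∑ i,
            t'' i a k * φ'' i none a k * (N.w i a k * N.C' i (workload N φ t i)) :=
          Finset.sum_congr rfl fun a _ => Finset.sum_comm
  rw [hlinkpart, hcpupart, ← Finset.sum_add_distrib]
  refine Finset.sum_congr rfl fun a _ => ?_
  rw [← Finset.sum_add_distrib]
  refine Finset.sum_congr rfl fun k _ => ?_
  rw [← Finset.sum_add_distrib]

lemma S2_split (φ'' : V → Option V → A → ℕ → ℝ) (t'' : V → A → ℕ → ℝ) :
    ∑ a, ∑ k ∈ Finset.range (N.K a + 1), ∑ i,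
      ((∑ j, t'' i a k * φ'' i (some j) a k * mdelta N φ t lam i a k (some j))
        + t'' i a k * φ'' i none a k * mdelta N φ t lam i a k none)
    = (∑ a, ∑ k ∈ Finset.range (N.K a + 1), ∑ i,
        ((∑ j, t'' i a k * φ'' i (some j) a k * (N.L a k * N.D' i j (linkFlow N φ t i j)))
          + t'' i a k * φ'' i none a k * (N.w i a k * N.C' i (workload N φ t i))))
      + ∑ a, ∑ k ∈ Finset.range (N.K a + 1), ∑ i,
        ((∑ j, t'' i a k * φ'' i (some j) a k * lam j a k)
          + t'' i a k * φ'' i none a k * lam i a (k + 1)) := by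
  rw [← Finset.sum_add_distrib]
  refine Finset.sum_congr rfl fun a _ => ?_
  rw [← Finset.sum_add_distrib]
  refine Finset.sum_congr rfl fun k _ => ?_
  rw [← Finset.sum_add_distrib]
  refine Finset.sum_congr rfl fun i _ => ?_
  simp only [mdelta]
  have : ∀ j : V, t'' i a k * φ'' i (some j) a k *
        (N.L a k * N.D' i j (linkFlow N φ t i j) + lam j a k)
      = t'' i a k * φ'' i (some j) a k * (N.L a k * N.D' i j (linkFlow N φ t i j))
        + t'' i a k * φ'' i (some j) a k * lam j a k := fun j => by ring
  rw [Finset.sum_congr rfl fun j _ => this j, Finset.sum_add_distrib]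
  ring

end AuxKKT

/-- **Sufficiency of the KKT condition under strictly positive traffic.** If `(φ,t)`
is feasible for `r`, all traffics are strictly positive, and `φ` satisfies the KKT
stationarity condition with respect to a marginal vector `λ`, then `(φ,t)` is
globally optimal. -/
theorem kkt_sufficient_positive_traffic
    (N : SCNet V A) (r : V → A → ℝ) (hr : ∀ i a, 0 ≤ r i a)
    (φ : V → Option V → A → ℕ → ℝ) (t : V → A → ℕ → ℝ) (lam : V → A → ℕ → ℝ)
    (hfeas : Feasible N r φ t) (hlam : IsMarginal N φ t lam)
    (hpos : ∀ i a k, k ≤ N.K a → 0 < t i a k)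
    (hkkt : ∀ i a k, k ≤ N.K a → ∀ j, Admissible N i a k j → 0 < φ i j a k →
      ∀ j', Admissible N i a k j' →
        t i a k * mdelta N φ t lam i a k j ≤ t i a k * mdelta N φ t lam i a k j') :
    ∀ (φ' : V → Option V → A → ℕ → ℝ) (t' : V → A → ℕ → ℝ),
      Feasible N r φ' t' → totalCost N φ t ≤ totalCost N φ' t' := by
  obtain ⟨hφ, ht⟩ := hfeas
  intro φ' t' hfeas'
  obtain ⟨hφ', ht'⟩ := hfeas'
  have hFnn : ∀ i j, 0 ≤ linkFlow N φ t i j := linkFlow_nonneg_s5 hφ ht.nonneg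
  have hF'nn : ∀ i j, 0 ≤ linkFlow N φ' t' i j := linkFlow_nonneg_s5 hφ' ht'.nonneg
  have hGnn : ∀ i, 0 ≤ workload N φ t i := workload_nonneg_s5 hφ ht.nonneg
  have hG'nn : ∀ i, 0 ≤ workload N φ' t' i := workload_nonneg_s5 hφ' ht'.nonneg
  -- gradient inequalities, per link / node
  have hDineq : ∀ i j, N.D' i j (linkFlow N φ t i j) *
        (linkFlow N φ' t' i j - linkFlow N φ t i j)
      ≤ (if N.E i j then N.D i j (linkFlow N φ' t' i j) else 0)
        - (if N.E i j then N.D i j (linkFlow N φ t i j) else 0) := by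
    intro i j
    by_cases hE : N.E i j
    · simp only [if_pos hE]
      have := convex_grad_ineq (N.hD_conv i j hE) (N.hD_deriv i j hE) (hFnn i j) (hF'nn i j)
      linarith
    · simp only [if_neg hE]
      rw [linkFlow_no_edge hφ hE, linkFlow_no_edge hφ' hE]
      simp
  have hCineq : ∀ i, N.C' i (workload N φ t i) *
        (workload N φ' t' i - workload N φ t i)
      ≤ N.C i (workload N φ' t' i) - N.C i (workload N φ t i) := by
    intro i
    have := convex_grad_ineq (N.hC_conv i) (N.hC_deriv i) (hGnn i) (hG'nn i)
    linarith
  -- first-order lower bound on the cost difference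
  have hstep1 :
      ((∑ i, ∑ j, N.D' i j (linkFlow N φ t i j) *
          (linkFlow N φ' t' i j - linkFlow N φ t i j))
        + ∑ i, N.C' i (workload N φ t i) * (workload N φ' t' i - workload N φ t i))
      ≤ totalCost N φ' t' - totalCost N φ t := by
    rw [totalCost, totalCost]
    have h1 : (∑ i, ∑ j, N.D' i j (linkFlow N φ t i j) *
          (linkFlow N φ' t' i j - linkFlow N φ t i j))
        ≤ (∑ i, ∑ j, if N.E i j then N.D i j (linkFlow N φ' t' i j) else 0)
          - ∑ i, ∑ j, if N.E i j then N.D i j (linkFlow N φ t i j) else 0 := by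
      rw [← Finset.sum_sub_distrib]
      refine Finset.sum_le_sum fun i _ => ?_
      rw [← Finset.sum_sub_distrib]
      exact Finset.sum_le_sum fun j _ => hDineq i j
    have h2 : (∑ i, N.C' i (workload N φ t i) *
          (workload N φ' t' i - workload N φ t i))
        ≤ (∑ i, N.C i (workload N φ' t' i)) - ∑ i, N.C i (workload N φ t i) := by
      rw [← Finset.sum_sub_distrib]
      exact Finset.sum_le_sum fun i _ => hCineq i
    linarith
  -- rewrite the first-order term as a difference of linear functionals
  have hexpand :
      ((∑ i, ∑ j, N.D' i j (linkFlow N φ t i j) *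
          (linkFlow N φ' t' i j - linkFlow N φ t i j))
        + ∑ i, N.C' i (workload N φ t i) * (workload N φ' t' i - workload N φ t i))
      = ((∑ i, ∑ j, N.D' i j (linkFlow N φ t i j) * linkFlow N φ' t' i j)
          + ∑ i, N.C' i (workload N φ t i) * workload N φ' t' i)
        - ((∑ i, ∑ j, N.D' i j (linkFlow N φ t i j) * linkFlow N φ t i j)
          + ∑ i, N.C' i (workload N φ t i) * workload N φ t i) := by
    have e1 : (∑ i, ∑ j, N.D' i j (linkFlow N φ t i j) *
          (linkFlow N φ' t' i j - linkFlow N φ t i j))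
        = (∑ i, ∑ j, N.D' i j (linkFlow N φ t i j) * linkFlow N φ' t' i j)
          - ∑ i, ∑ j, N.D' i j (linkFlow N φ t i j) * linkFlow N φ t i j := by
      rw [← Finset.sum_sub_distrib]
      refine Finset.sum_congr rfl fun i _ => ?_
      rw [← Finset.sum_sub_distrib]
      exact Finset.sum_congr rfl fun j _ => mul_sub _ _ _
    have e2 : (∑ i, N.C' i (workload N φ t i) *
          (workload N φ' t' i - workload N φ t i))
        = (∑ i, N.C' i (workload N φ t i) * workload N φ' t' i)
          - ∑ i, N.C' i (workload N φ t i) * workload N φ t i := by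
      rw [← Finset.sum_sub_distrib]
      exact Finset.sum_congr rfl fun i _ => mul_sub _ _ _
    rw [e1, e2]; ring
  -- the two linear functionals, via the stage-wise expansion
  have hlin' := linE_eq (N := N) (φ := φ) (t := t) φ' t'
  have hlin := linE_eq (N := N) (φ := φ) (t := t) φ t
  have hsplit' := S2_split (N := N) (φ := φ) (t := t) (lam := lam) φ' t'
  have hsplit := S2_split (N := N) (φ := φ) (t := t) (lam := lam) φ t
  have hX' : (∑ a, ∑ k ∈ Finset.range (N.K a + 1), ∑ i,
        ((∑ j, t' i a k * φ' i (some j) a k * lam j a k)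
          + t' i a k * φ' i none a k * lam i a (k + 1)))
      = (∑ a, ∑ k ∈ Finset.range (N.K a + 1), ∑ i, t' i a k * lam i a k)
        - ∑ a, ∑ i, r i a * lam i a 0 := by
    rw [← Finset.sum_sub_distrib]
    exact Finset.sum_congr rfl fun a _ => telescope_a hφ' ht' a
  have hX : (∑ a, ∑ k ∈ Finset.range (N.K a + 1), ∑ i,
        ((∑ j, t i a k * φ i (some j) a k * lam j a k)
          + t i a k * φ i none a k * lam i a (k + 1)))
      = (∑ a, ∑ k ∈ Finset.range (N.K a + 1), ∑ i, t i a k * lam i a k)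
        - ∑ a, ∑ i, r i a * lam i a 0 := by
    rw [← Finset.sum_sub_distrib]
    exact Finset.sum_congr rfl fun a _ => telescope_a hφ ht a
  have hS2eq : (∑ a, ∑ k ∈ Finset.range (N.K a + 1), ∑ i,
        ((∑ j, t i a k * φ i (some j) a k * mdelta N φ t lam i a k (some j))
          + t i a k * φ i none a k * mdelta N φ t lam i a k none))
      = ∑ a, ∑ k ∈ Finset.range (N.K a + 1), ∑ i, t i a k * lam i a k := by
    refine Finset.sum_congr rfl fun a _ => Finset.sum_congr rfl fun k hk => ?_
    refine Finset.sum_congr rfl fun i _ => ?_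
    exact row_eq hφ hlam i a k (Nat.lt_succ_iff.mp (Finset.mem_range.mp hk))
  have hS1le : (∑ a, ∑ k ∈ Finset.range (N.K a + 1), ∑ i, t' i a k * lam i a k)
      ≤ ∑ a, ∑ k ∈ Finset.range (N.K a + 1), ∑ i,
        ((∑ j, t' i a k * φ' i (some j) a k * mdelta N φ t lam i a k (some j))
          + t' i a k * φ' i none a k * mdelta N φ t lam i a k none) := by
    refine Finset.sum_le_sum fun a _ => Finset.sum_le_sum fun k hk => ?_
    refine Finset.sum_le_sum fun i _ => ?_
    exact row_le hφ hlam hpos hkkt hφ' ht'.nonneg i a k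
      (Nat.lt_succ_iff.mp (Finset.mem_range.mp hk))
  linarith [hstep1, hexpand, hlin', hlin, hsplit', hsplit, hX', hX, hS2eq, hS1le]
end

section
/- Euler-type marginal-cost identity (equation (proof:SuffCond7) in the proof of Theorem 2): In the service-chain model, let (φ,t) be feasible for r and let λ be any marginal vector for (φ,t). Then Σ_{(i,j)∈E} D'_{ij}(F_{ij})·F_{ij} + Σ_{i∈V} C'_i(G_i)·G_i = Σ_{i∈V} Σ_{a∈A} λ_i(a,0)·r_i(a). -/
open scoped BigOperators
open Classical

variable {V A : Type} [Fintype V] [DecidableEq V] [Fintype A]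

/-- Total marginal link cost at stage `(a,k)`. -/
noncomputable def Elink (N : SCNet V A) (φ : V → Option V → A → ℕ → ℝ)
    (t : V → A → ℕ → ℝ) (a : A) (k : ℕ) : ℝ :=
  ∑ i, ∑ j, (N.L a k * N.D' i j (linkFlow N φ t i j)) * (t i a k * φ i (some j) a k)

/-- Total marginal computation cost at stage `(a,k)`. -/
noncomputable def Ecpu (N : SCNet V A) (φ : V → Option V → A → ℕ → ℝ)
    (t : V → A → ℕ → ℝ) (a : A) (k : ℕ) : ℝ :=
  ∑ i, (N.w i a k * N.C' i (workload N φ t i)) * (t i a k * φ i none a k)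

/-- Exogenous-or-CPU input into stage `(a,k)` at node `i`. -/
noncomputable def inp (r : V → A → ℝ) (φ : V → Option V → A → ℕ → ℝ)
    (t : V → A → ℕ → ℝ) (i : V) (a : A) (k : ℕ) : ℝ :=
  if k = 0 then r i a else t i a (k-1) * φ i none a (k-1)

lemma unified_marginal (N : SCNet V A) (φ : V → Option V → A → ℕ → ℝ)
    (t : V → A → ℕ → ℝ) (lam : V → A → ℕ → ℝ)
    (hφ : IsStrategy N φ) (hlam : IsMarginal N φ t lam)
    (i : V) (a : A) (k : ℕ) (hk : k ≤ N.K a) :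
    lam i a k
      = (∑ j, φ i (some j) a k * (N.L a k * N.D' i j (linkFlow N φ t i j) + lam j a k))
        + φ i none a k * (N.w i a k * N.C' i (workload N φ t i) + lam i a (k+1)) := by
  rcases lt_or_eq_of_le hk with h | h
  · exact hlam.step i a k h
  · subst h
    rw [hφ.cpu_last]
    simpa using hlam.last i a

lemma traffic_inp (N : SCNet V A) (r : V → A → ℝ) (φ : V → Option V → A → ℕ → ℝ)
    (t : V → A → ℕ → ℝ) (ht : IsTraffic N r φ t)
    (i : V) (a : A) (k : ℕ) (hk : k ≤ N.K a) :
    t i a k = (∑ j, t j a k * φ j (some i) a k) + inp r φ t i a k := by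
  cases k with
  | zero =>
    have h0 : inp r φ t i a 0 = r i a := by simp [inp]
    rw [h0, ht.base]; ring
  | succ n =>
    have h0 : inp r φ t i a (n+1) = t i a n * φ i none a n := by simp [inp]
    rw [h0]
    exact ht.step i a (n+1) (Nat.succ_le_succ (Nat.zero_le n)) hk

lemma level_eq (N : SCNet V A) (r : V → A → ℝ) (φ : V → Option V → A → ℕ → ℝ)
    (t : V → A → ℕ → ℝ) (lam : V → A → ℕ → ℝ)
    (hφ : IsStrategy N φ) (ht : IsTraffic N r φ t) (hlam : IsMarginal N φ t lam)
    (a : A) (k : ℕ) (hk : k ≤ N.K a) :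
    ∑ i, lam i a k * inp r φ t i a k
      = Elink N φ t a k + Ecpu N φ t a k
        + ∑ i, lam i a (k+1) * inp r φ t i a (k+1) := by
  have h1 : ∑ i, t i a k * lam i a k
      = (Elink N φ t a k
          + ∑ i, ∑ j, (t i a k * φ i (some j) a k) * lam j a k)
        + (Ecpu N φ t a k
          + ∑ i, (t i a k * φ i none a k) * lam i a (k+1)) := by
    rw [Elink, Ecpu, ← Finset.sum_add_distrib, ← Finset.sum_add_distrib,
      ← Finset.sum_add_distrib]
    refine Finset.sum_congr rfl fun i _ => ?_
    rw [unified_marginal N φ t lam hφ hlam i a k hk, ← Finset.sum_add_distrib]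
    rw [mul_add, Finset.mul_sum]
    congr 1
    · exact Finset.sum_congr rfl fun j _ => by ring
    · ring
  have h2 : ∑ i, t i a k * lam i a k
      = (∑ i, ∑ j, (t i a k * φ i (some j) a k) * lam j a k)
        + ∑ i, lam i a k * inp r φ t i a k := by
    have swap : (∑ i, ∑ j, (t i a k * φ i (some j) a k) * lam j a k)
        = ∑ i, (∑ j, t j a k * φ j (some i) a k) * lam i a k := by
      rw [Finset.sum_comm]
      exact Finset.sum_congr rfl fun i _ => (Finset.sum_mul _ _ _).symm
    rw [swap, ← Finset.sum_add_distrib]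
    refine Finset.sum_congr rfl fun i _ => ?_
    rw [traffic_inp N r φ t ht i a k hk]
    ring
  have h3 : ∀ i, lam i a (k+1) * inp r φ t i a (k+1)
      = (t i a k * φ i none a k) * lam i a (k+1) := by
    intro i
    have h0 : inp r φ t i a (k+1) = t i a k * φ i none a k := by simp [inp]
    rw [h0]; ring
  rw [h1] at h2
  simp only [h3]
  linarith

/-- **Euler-type marginal-cost identity.** For any feasible pair `(φ,t)` and any
marginal vector `λ` for it,
`Σ_{(i,j)∈E} D'_{ij}(F_{ij})·F_{ij} + Σ_i C'_i(G_i)·G_i = Σ_i Σ_a λ_i(a,0)·r_i(a)`. -/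
theorem euler_marginal_identity
    (N : SCNet V A) (r : V → A → ℝ) (hr : ∀ i a, 0 ≤ r i a)
    (φ : V → Option V → A → ℕ → ℝ) (t : V → A → ℕ → ℝ) (lam : V → A → ℕ → ℝ)
    (hfeas : Feasible N r φ t) (hlam : IsMarginal N φ t lam) :
    (∑ i, ∑ j, if N.E i j then
        N.D' i j (linkFlow N φ t i j) * linkFlow N φ t i j else 0)
      + (∑ i, N.C' i (workload N φ t i) * workload N φ t i)
    = ∑ i, ∑ a, lam i a 0 * r i a := by
  obtain ⟨hφ, ht⟩ := hfeas
  -- telescoping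
  have htop : ∀ a : A, ∑ i, lam i a (N.K a + 1) * inp r φ t i a (N.K a + 1) = 0 := by
    intro a
    refine Finset.sum_eq_zero fun i _ => ?_
    have h0 : inp r φ t i a (N.K a + 1) = t i a (N.K a) * φ i none a (N.K a) := by
      simp [inp]
    rw [h0, hφ.cpu_last]; ring
  have htel : ∀ a : A, ∀ n k : ℕ, k + n = N.K a + 1 →
      ∑ i, lam i a k * inp r φ t i a k
        = ∑ m ∈ Finset.Ico k (N.K a + 1), (Elink N φ t a m + Ecpu N φ t a m) := by
    intro a n
    induction n with
    | zero =>
      intro k hk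
      have hk' : k = N.K a + 1 := by omega
      subst hk'
      rw [Finset.Ico_self, Finset.sum_empty, htop a]
    | succ n ih =>
      intro k hk
      have hk' : k ≤ N.K a := by omega
      rw [level_eq N r φ t lam hφ ht hlam a k hk', ih (k+1) (by omega),
        Finset.sum_eq_sum_Ico_succ_bot (by omega : k < N.K a + 1)]
  have hzero : ∀ a : A,
      ∑ i, lam i a 0 * r i a
        = ∑ m ∈ Finset.range (N.K a + 1), (Elink N φ t a m + Ecpu N φ t a m) := by
    intro a
    calc ∑ i, lam i a 0 * r i a = ∑ i, lam i a 0 * inp r φ t i a 0 :=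
          Finset.sum_congr rfl fun i _ => by simp [inp]
      _ = _ := by rw [htel a (N.K a + 1) 0 (by omega), Finset.range_eq_Ico]
  have hRHS : ∑ i, ∑ a, lam i a 0 * r i a
      = (∑ a, ∑ m ∈ Finset.range (N.K a + 1), Elink N φ t a m)
        + ∑ a, ∑ m ∈ Finset.range (N.K a + 1), Ecpu N φ t a m := by
    rw [Finset.sum_comm, ← Finset.sum_add_distrib]
    refine Finset.sum_congr rfl fun a _ => ?_
    rw [hzero a, Finset.sum_add_distrib]
  -- identify the aggregated marginal link cost
  have hlink : ∑ a, ∑ m ∈ Finset.range (N.K a + 1), Elink N φ t a m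
      = ∑ i, ∑ j, if N.E i j then
          N.D' i j (linkFlow N φ t i j) * linkFlow N φ t i j else 0 := by
    have key : ∀ i j : V,
        (∑ a, ∑ m ∈ Finset.range (N.K a + 1),
          (N.L a m * N.D' i j (linkFlow N φ t i j)) * (t i a m * φ i (some j) a m))
        = if N.E i j then N.D' i j (linkFlow N φ t i j) * linkFlow N φ t i j else 0 := by
      intro i j
      by_cases h : N.E i j
      · rw [if_pos h, linkFlow, Finset.mul_sum]
        refine Finset.sum_congr rfl fun a _ => ?_
        rw [Finset.mul_sum]
        exact Finset.sum_congr rfl fun m _ => by ring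
      · rw [if_neg h]
        refine Finset.sum_eq_zero fun a _ => Finset.sum_eq_zero fun m _ => ?_
        rw [hφ.no_edge i j a m h]
        ring
    calc ∑ a, ∑ m ∈ Finset.range (N.K a + 1), Elink N φ t a m
        = ∑ a, ∑ i : V, ∑ j : V, ∑ m ∈ Finset.range (N.K a + 1),
            (N.L a m * N.D' i j (linkFlow N φ t i j)) * (t i a m * φ i (some j) a m) := by
          refine Finset.sum_congr rfl fun a _ => ?_
          simp only [Elink]
          rw [Finset.sum_comm]
          exact Finset.sum_congr rfl fun i _ => Finset.sum_comm
      _ = ∑ i : V, ∑ j : V, ∑ a, ∑ m ∈ Finset.range (N.K a + 1),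
            (N.L a m * N.D' i j (linkFlow N φ t i j)) * (t i a m * φ i (some j) a m) := by
          rw [Finset.sum_comm]
          exact Finset.sum_congr rfl fun i _ => Finset.sum_comm
      _ = _ := Finset.sum_congr rfl fun i _ => Finset.sum_congr rfl fun j _ => key i j
  have hcpu : ∑ a, ∑ m ∈ Finset.range (N.K a + 1), Ecpu N φ t a m
      = ∑ i, N.C' i (workload N φ t i) * workload N φ t i := by
    have key : ∀ i : V,
        (∑ a, ∑ m ∈ Finset.range (N.K a + 1),
          (N.w i a m * N.C' i (workload N φ t i)) * (t i a m * φ i none a m))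
        = N.C' i (workload N φ t i) * workload N φ t i := by
      intro i
      rw [workload, Finset.mul_sum]
      refine Finset.sum_congr rfl fun a _ => ?_
      rw [Finset.mul_sum]
      exact Finset.sum_congr rfl fun m _ => by ring
    calc ∑ a, ∑ m ∈ Finset.range (N.K a + 1), Ecpu N φ t a m
        = ∑ a, ∑ i : V, ∑ m ∈ Finset.range (N.K a + 1),
            (N.w i a m * N.C' i (workload N φ t i)) * (t i a m * φ i none a m) := by
          refine Finset.sum_congr rfl fun a _ => ?_
          simp only [Ecpu]
          exact Finset.sum_comm
      _ = ∑ i : V, ∑ a, ∑ m ∈ Finset.range (N.K a + 1),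
            (N.w i a m * N.C' i (workload N φ t i)) * (t i a m * φ i none a m) :=
          Finset.sum_comm
      _ = _ := Finset.sum_congr rfl fun i _ => key i
  rw [hRHS, hlink, hcpu]
end
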